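/- arXiv:1507.06352 — 2 statements merged into one kernel-verified Lean document; each statement's English description precedes it below -/
import Mathlib

section
/- For every G* in the convex hull of 𝒢 there exists a sequence G_1, G_2, … of elements of 𝒢 with ‖G* − G_ℓ‖ → 0; equivalently, the Hausdorff distance between conv(𝒢) and 𝒢 is zero. -/
open MeasureTheory

noncomputable section

/-- The uniform probability measure on `[0,1]`. -/
def unif : Measure ℝ := volume.restrict (Set.Icc (0:ℝ) 1)

/-- Population class frequencies `π_τ`. -/
def piTau {K : ℕ} (τ : ℝ → Fin K) (t : Fin K) : ℝ :=
  ∫ y, (if τ y = t then (1:ℝ) else 0) ∂unif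

/-- The vector `g_{τ=t} ∈ ℝ^m`, `g_{τ=t}(i) = ∫ ω(x_i,y) 1{τ(y)=t} dy`. -/
def gTau {m K : ℕ} (w : ℝ → ℝ → ℝ) (x : Fin m → ℝ)
    (τ : ℝ → Fin K) (t : Fin K) (i : Fin m) : ℝ :=
  ∫ y, w (x i) y * (if τ y = t then 1 else 0) ∂unif

/-- The stacked vector `G_τ = (g_{τ=1}/√m, …, g_{τ=K}/√m, π_τ) ∈ ℝ^{mK+K}`. -/
def GTauVec {m K : ℕ} (w : ℝ → ℝ → ℝ) (x : Fin m → ℝ) (τ : ℝ → Fin K) :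
    EuclideanSpace ℝ ((Fin K × Fin m) ⊕ Fin K) :=
  (EuclideanSpace.equiv ((Fin K × Fin m) ⊕ Fin K) ℝ).symm
    (Sum.elim (fun q => gTau w x τ q.1 q.2 / Real.sqrt m) (fun t => piTau τ t))

/-- The set `𝒢 = {G_τ : τ measurable [0,1] → [K]}`. -/
def Gset {m K : ℕ} (w : ℝ → ℝ → ℝ) (x : Fin m → ℝ) :
    Set (EuclideanSpace ℝ ((Fin K × Fin m) ⊕ Fin K)) :=
  {v | ∃ τ : ℝ → Fin K, Measurable τ ∧ v = GTauVec w x τ}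

namespace GsetAux

open Filter Set

/-- Rademacher-type square wave at scale `h`. -/
def rad (h y : ℝ) : ℝ := if Even ⌊y / h⌋ then 1 else 0

lemma rad_nonneg (h y : ℝ) : 0 ≤ rad h y := by unfold rad; split <;> norm_num

lemma rad_le_one (h y : ℝ) : rad h y ≤ 1 := by unfold rad; split <;> norm_num

lemma abs_rad_le (h y : ℝ) : |rad h y| ≤ 1 := by
  rw [abs_le]; exact ⟨by linarith [rad_nonneg h y], rad_le_one h y⟩

lemma measurable_rad (h : ℝ) : Measurable (rad h) := by
  unfold rad
  refine Measurable.ite ?_ measurable_const measurable_const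
  have hm : Measurable fun y : ℝ => ⌊y / h⌋ := (measurable_id.div_const h).floor
  exact hm (show MeasurableSet {n : ℤ | Even n} from trivial)

lemma rad_flip {h : ℝ} (hh : 0 < h) (y : ℝ) : rad h (y + h) = 1 - rad h y := by
  unfold rad
  have h1 : (y + h) / h = y / h + 1 := by field_simp
  rw [h1, Int.floor_add_one]
  by_cases he : Even ⌊y / h⌋ <;> simp [he, Int.even_add_one]

lemma key_ineq (g : ℝ → ℝ) (hg : Integrable g volume) {h : ℝ} (hh : 0 < h) :
    |2 * (∫ y, g y * rad h y) - ∫ y, g y| ≤ ∫ y, |g y - g (y + h)| := by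
  have me := measurable_rad h
  have radbd : ∃ C, ∀ y, ‖rad h y‖ ≤ C :=
    ⟨1, fun y => by simpa [Real.norm_eq_abs] using abs_rad_le h y⟩
  have hge : Integrable (fun y => g y * rad h y) volume := by
    have := Integrable.bdd_mul hg me.aestronglyMeasurable (Filter.Eventually.of_forall radbd.choose_spec)
    exact this.congr (Filter.Eventually.of_forall fun y => mul_comm _ _)
  have hgh : Integrable (fun y => g (y + h)) volume := hg.comp_add_right h
  have hghe : Integrable (fun y => g (y + h) * rad h y) volume := by
    have := Integrable.bdd_mul hgh me.aestronglyMeasurable (Filter.Eventually.of_forall radbd.choose_spec)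
    exact this.congr (Filter.Eventually.of_forall fun y => mul_comm _ _)
  have trans : (∫ y, g (y + h) * rad h (y + h)) = ∫ y, g y * rad h y :=
    integral_add_right_eq_self (fun y => g y * rad h y) h
  have eq1 : (∫ y, g y * rad h y) = (∫ y, g (y + h)) - ∫ y, g (y + h) * rad h y := by
    rw [← trans]
    have : (fun y => g (y + h) * rad h (y + h))
        = fun y => g (y + h) - g (y + h) * rad h y := by
      funext y; rw [rad_flip hh]; ring
    rw [this, integral_sub hgh hghe]
  have eq2 : (∫ y, g (y + h)) = ∫ y, g y := integral_add_right_eq_self g h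
  have eq3 : 2 * (∫ y, g y * rad h y) - ∫ y, g y
      = ∫ y, (g y - g (y + h)) * rad h y := by
    have hs : (∫ y, (g y - g (y + h)) * rad h y)
        = (∫ y, g y * rad h y) - ∫ y, g (y + h) * rad h y := by
      simp_rw [sub_mul]; exact integral_sub hge hghe
    rw [hs]; linarith [eq1, eq2]
  rw [eq3]
  have habs : |∫ y, (g y - g (y + h)) * rad h y| ≤ ∫ y, |(g y - g (y + h)) * rad h y| := by
    have := norm_integral_le_integral_norm (μ := volume)
      (fun y => (g y - g (y + h)) * rad h y)
    simp only [Real.norm_eq_abs] at this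
    exact this
  refine habs.trans (integral_mono ?_ ((hg.sub hgh).abs) ?_)
  · have := Integrable.bdd_mul (hg.sub hgh) me.aestronglyMeasurable (Filter.Eventually.of_forall radbd.choose_spec)
    exact (this.congr (Filter.Eventually.of_forall fun y => mul_comm _ _)).abs
  · intro y
    dsimp only
    rw [abs_mul]
    calc |g y - g (y + h)| * |rad h y| ≤ |g y - g (y + h)| * 1 :=
          mul_le_mul_of_nonneg_left (abs_rad_le h y) (abs_nonneg _)
      _ = |g y - g (y + h)| := mul_one _

lemma tendsto_L1_translate (g : ℝ → ℝ) (hg : Integrable g volume) :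
    Tendsto (fun n : ℕ => ∫ y, |g y - g (y + (1/2:ℝ)^n)|) atTop (nhds 0) := by
  have hpow : Tendsto (fun n : ℕ => ((1:ℝ)/2)^n) atTop (nhds 0) :=
    tendsto_pow_atTop_nhds_zero_of_lt_one (by norm_num) (by norm_num)
  rw [NormedAddCommGroup.tendsto_nhds_zero]
  intro ε hε
  obtain ⟨φ, hφsupp, hφle, hφcont, hφint⟩ :=
    hg.exists_hasCompactSupport_integral_sub_le (show (0:ℝ) < ε/4 by linarith)
  obtain ⟨C, hC⟩ := hφsupp.exists_bound_of_continuous hφcont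
  obtain ⟨R, hR⟩ : ∃ R : ℝ, tsupport φ ⊆ Icc (-R) R := by
    obtain ⟨r, hr⟩ := hφsupp.isBounded.subset_closedBall 0
    exact ⟨r, by simpa [Real.closedBall_eq_Icc] using hr⟩
  -- continuous compactly supported case via dominated convergence
  have hcts : Tendsto (fun n : ℕ => ∫ y, |φ y - φ (y + (1/2:ℝ)^n)|) atTop (nhds 0) := by
    have hmeas : ∀ n : ℕ, AEStronglyMeasurable (fun y => |φ y - φ (y + (1/2:ℝ)^n)|) volume := by
      intro n
      exact ((hφcont.sub (hφcont.comp (continuous_id.add continuous_const))).abs).aestronglyMeasurable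
    have hbint : Integrable (Set.indicator (Icc (-R-1) (R+1)) (fun _ => 2*C)) volume := by
      rw [integrable_indicator_iff measurableSet_Icc]
      exact integrableOn_const (by rw [Real.volume_Icc]; exact ENNReal.ofReal_ne_top)
    have hbd : ∀ n : ℕ, ∀ᵐ y : ℝ, ‖|φ y - φ (y + (1/2:ℝ)^n)|‖
        ≤ Set.indicator (Icc (-R-1) (R+1)) (fun _ => 2*C) y := by
      intro n
      refine Filter.Eventually.of_forall fun y => ?_
      have hp0 : (0:ℝ) < ((1:ℝ)/2)^n := by positivity
      have hp1 : ((1:ℝ)/2)^n ≤ 1 := pow_le_one₀ (by norm_num) (by norm_num)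
      rw [Real.norm_eq_abs, abs_abs]
      by_cases hy : y ∈ Icc (-R-1) (R+1)
      · rw [Set.indicator_of_mem hy]
        have h1 : |φ y| ≤ C := by simpa [Real.norm_eq_abs] using hC y
        have h2 : |φ (y + (1/2:ℝ)^n)| ≤ C := by simpa [Real.norm_eq_abs] using hC _
        calc |φ y - φ (y + (1/2:ℝ)^n)| ≤ |φ y| + |φ (y + (1/2:ℝ)^n)| := abs_sub _ _
          _ ≤ C + C := add_le_add h1 h2
          _ = 2*C := by ring
      · rw [Set.indicator_of_notMem hy]
        have hy' : y < -R-1 ∨ R+1 < y := by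
          rcases lt_or_ge y (-R-1) with h | h
          · exact Or.inl h
          · right
            by_contra hle
            exact hy (mem_Icc.mpr ⟨h, not_lt.mp hle⟩)
        have hz1 : φ y = 0 := by
          apply image_eq_zero_of_notMem_tsupport
          intro hmem
          have := hR hmem
          rcases hy' with h | h <;> simp only [mem_Icc] at this <;> linarith [this.1, this.2]
        have hz2 : φ (y + (1/2:ℝ)^n) = 0 := by
          apply image_eq_zero_of_notMem_tsupport
          intro hmem
          have := hR hmem
          rcases hy' with h | h <;> simp only [mem_Icc] at this <;> linarith [this.1, this.2]
        rw [hz1, hz2]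
        simp
    have hlim : ∀ᵐ y : ℝ, Tendsto (fun n : ℕ => |φ y - φ (y + (1/2:ℝ)^n)|) atTop
        (nhds ((fun _ : ℝ => (0:ℝ)) y)) := by
      refine Filter.Eventually.of_forall fun y => ?_
      have h1 : Tendsto (fun n : ℕ => y + (1/2:ℝ)^n) atTop (nhds y) := by
        simpa using tendsto_const_nhds.add hpow
      have h2 : Tendsto (fun n : ℕ => φ (y + (1/2:ℝ)^n)) atTop (nhds (φ y)) :=
        (hφcont.continuousAt.tendsto).comp h1
      have h3 := (tendsto_const_nhds (x := φ y)).sub h2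
      rw [sub_self] at h3
      simpa using h3.abs
    have := tendsto_integral_of_dominated_convergence _ hmeas hbint hbd hlim
    simpa using this
  have hev := (NormedAddCommGroup.tendsto_nhds_zero.mp hcts) (ε/4) (by linarith)
  filter_upwards [hev] with n hn
  set h := ((1:ℝ)/2)^n with hh
  have hp0 : (0:ℝ) < h := by positivity
  have int1 : Integrable (fun y => |g y - φ y|) volume := (hg.sub hφint).abs
  have int2 : Integrable (fun y => |φ y - φ (y + h)|) volume :=
    (hφint.sub (hφint.comp_add_right h)).abs
  have int3 : Integrable (fun y => |φ (y + h) - g (y + h)|) volume :=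
    ((hφint.comp_add_right h).sub (hg.comp_add_right h)).abs
  have hmono : (∫ y, |g y - g (y + h)|)
      ≤ ∫ y, (|g y - φ y| + |φ y - φ (y + h)| + |φ (y + h) - g (y + h)|) := by
    refine integral_mono ((hg.sub (hg.comp_add_right h)).abs) ((int1.add int2).add int3) ?_
    intro y
    calc |g y - g (y + h)| ≤ |g y - φ (y + h)| + |φ (y + h) - g (y + h)| := abs_sub_le _ _ _
      _ ≤ (|g y - φ y| + |φ y - φ (y + h)|) + |φ (y + h) - g (y + h)| := by
          gcongr; exact abs_sub_le _ _ _
  have int12 : Integrable (fun y => |g y - φ y| + |φ y - φ (y + h)|) volume := int1.add int2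
  have hsum : (∫ y, (|g y - φ y| + |φ y - φ (y + h)| + |φ (y + h) - g (y + h)|))
      = (∫ y, |g y - φ y|) + (∫ y, |φ y - φ (y + h)|) + ∫ y, |φ (y + h) - g (y + h)| := by
    rw [integral_add int12 int3, integral_add int1 int2]
  have h3eq : (∫ y, |φ (y + h) - g (y + h)|) = ∫ y, |g y - φ y| := by
    have := integral_add_right_eq_self (μ := volume) (fun y => |φ y - g y|) h
    rw [this]
    simp_rw [abs_sub_comm]
  have h1le : (∫ y, |g y - φ y|) ≤ ε/4 := by
    simpa [Real.norm_eq_abs] using hφle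
  have h2lt : (∫ y, |φ y - φ (y + h)|) < ε/4 := by
    have : (∫ y, |φ y - φ (y + h)|) ≤ ‖∫ y, |φ y - φ (y + h)|‖ := le_abs_self _
    exact lt_of_le_of_lt this hn
  have hnn : (0:ℝ) ≤ ∫ y, |g y - g (y + h)| :=
    integral_nonneg fun y => abs_nonneg _
  rw [Real.norm_eq_abs, abs_of_nonneg hnn]
  calc (∫ y, |g y - g (y + h)|)
      ≤ (∫ y, |g y - φ y|) + (∫ y, |φ y - φ (y + h)|) + ∫ y, |φ (y + h) - g (y + h)| := by
        rw [← hsum]; exact hmono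
    _ = (∫ y, |g y - φ y|) + (∫ y, |φ y - φ (y + h)|) + ∫ y, |g y - φ y| := by rw [h3eq]
    _ < ε/4 + ε/4 + ε/4 := by
        have := h1le; have := h2lt; linarith
    _ < ε := by linarith

lemma tendsto_integral_rad (g : ℝ → ℝ) (hg : Integrable g volume) :
    Tendsto (fun n : ℕ => ∫ y, g y * rad ((1/2:ℝ)^n) y) atTop
      (nhds ((1/2) * ∫ y, g y)) := by
  set c := ∫ y, g y with hc
  have key : ∀ n : ℕ, ‖2 * (∫ y, g y * rad ((1/2:ℝ)^n) y) - c‖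
      ≤ ∫ y, |g y - g (y + (1/2:ℝ)^n)| := by
    intro n
    rw [Real.norm_eq_abs]
    exact key_ineq g hg (by positivity)
  have h2 : Tendsto (fun n : ℕ => 2 * (∫ y, g y * rad ((1/2:ℝ)^n) y) - c) atTop (nhds 0) :=
    squeeze_zero_norm key (tendsto_L1_translate g hg)
  have h3 := (h2.add (tendsto_const_nhds (x := c))).div_const 2
  have heq : (fun n : ℕ => (2 * (∫ y, g y * rad ((1/2:ℝ)^n) y) - c + c)/2)
      = fun n : ℕ => ∫ y, g y * rad ((1/2:ℝ)^n) y := by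
    funext n; ring
  rw [heq] at h3
  have : (0 + c)/2 = (1/2) * c := by ring
  rwa [this] at h3


lemma integrable_unif {F : ℝ → ℝ} (hF : Measurable F) (hb : ∀ y, |F y| ≤ 1) :
    Integrable F unif := by
  refine Integrable.mono' (g := fun _ => (1:ℝ)) ?_ hF.aestronglyMeasurable
    (Filter.Eventually.of_forall fun y => by simpa [Real.norm_eq_abs] using hb y)
  unfold unif
  exact integrableOn_const (by rw [Real.volume_Icc]; exact ENNReal.ofReal_ne_top)

lemma tendsto_integral_rad_unif (F : ℝ → ℝ) (hF : Measurable F) (hFb : ∀ y, |F y| ≤ 1) :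
    Tendsto (fun n : ℕ => ∫ y, F y * rad ((1/2:ℝ)^n) y ∂unif) atTop
      (nhds ((1/2) * ∫ y, F y ∂unif)) := by
  have hmeasI : MeasurableSet (Set.Icc (0:ℝ) 1) := measurableSet_Icc
  set g := Set.indicator (Set.Icc (0:ℝ) 1) F with hgdef
  have hg : Integrable g volume := by
    rw [hgdef, integrable_indicator_iff hmeasI]
    exact integrable_unif hF hFb
  have conv := tendsto_integral_rad g hg
  have e1 : ∀ n : ℕ, (∫ y, F y * rad ((1/2:ℝ)^n) y ∂unif)
      = ∫ y, g y * rad ((1/2:ℝ)^n) y := by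
    intro n
    show (∫ y, F y * rad ((1/2:ℝ)^n) y ∂(volume.restrict (Set.Icc (0:ℝ) 1))) = _
    rw [← integral_indicator hmeasI]
    congr 1
    funext y
    by_cases hy : y ∈ Set.Icc (0:ℝ) 1 <;>
      simp [hgdef, Set.indicator_of_mem, Set.indicator_of_notMem, hy]
  have e2 : (∫ y, F y ∂unif) = ∫ y, g y := by
    show (∫ y, F y ∂(volume.restrict (Set.Icc (0:ℝ) 1))) = _
    rw [← integral_indicator hmeasI]
  rw [e2]
  exact conv.congr fun n => (e1 n).symm

end GsetAux


namespace GsetAux2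

open Filter Set GsetAux

lemma meas_ind {K : ℕ} {τ : ℝ → Fin K} (hτ : Measurable τ) (t : Fin K) :
    Measurable (fun y => if τ y = t then (1:ℝ) else 0) := by
  refine Measurable.ite ?_ measurable_const measurable_const
  exact hτ (measurableSet_singleton t)

lemma tendsto_coord {K : ℕ} (f : ℝ → ℝ) (hf : Measurable f)
    (hf0 : ∀ y, 0 ≤ f y) (hf1 : ∀ y, f y ≤ 1)
    {τ σ : ℝ → Fin K} (hτ : Measurable τ) (hσ : Measurable σ) (t : Fin K) :
    Tendsto (fun n : ℕ => ∫ y,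
        f y * (if (if Even ⌊y / (1/2:ℝ)^n⌋ then τ y else σ y) = t then (1:ℝ) else 0) ∂unif)
      atTop
      (nhds ((1/2) * (∫ y, f y * (if τ y = t then (1:ℝ) else 0) ∂unif)
        + (1/2) * (∫ y, f y * (if σ y = t then (1:ℝ) else 0) ∂unif))) := by
  set Fτ := fun y => f y * (if τ y = t then (1:ℝ) else 0) with hFτ
  set Fσ := fun y => f y * (if σ y = t then (1:ℝ) else 0) with hFσ
  have hFτm : Measurable Fτ := hf.mul (meas_ind hτ t)
  have hFσm : Measurable Fσ := hf.mul (meas_ind hσ t)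
  have hFrange : ∀ (F : ℝ → ℝ), (∀ y, 0 ≤ F y ∧ F y ≤ 1) → ∀ y, |F y| ≤ 1 := by
    intro F hF y
    rw [abs_le]
    exact ⟨by linarith [(hF y).1], (hF y).2⟩
  have hFτr : ∀ y, 0 ≤ Fτ y ∧ Fτ y ≤ 1 := by
    intro y
    constructor
    · apply mul_nonneg (hf0 y); split <;> norm_num
    · apply mul_le_one₀ (hf1 y) ?_ ?_ <;> split <;> norm_num
  have hFσr : ∀ y, 0 ≤ Fσ y ∧ Fσ y ≤ 1 := by
    intro y
    constructor
    · apply mul_nonneg (hf0 y); split <;> norm_num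
    · apply mul_le_one₀ (hf1 y) ?_ ?_ <;> split <;> norm_num
  have hdm : Measurable (fun y => Fτ y - Fσ y) := hFτm.sub hFσm
  have hdb : ∀ y, |Fτ y - Fσ y| ≤ 1 := by
    intro y
    rw [abs_le]
    constructor <;> [linarith [(hFτr y).1, (hFσr y).2]; linarith [(hFτr y).2, (hFσr y).1]]
  have hiτ : Integrable Fτ unif := integrable_unif hFτm (hFrange Fτ hFτr)
  have hiσ : Integrable Fσ unif := integrable_unif hFσm (hFrange Fσ hFσr)
  have main := tendsto_integral_rad_unif (fun y => Fτ y - Fσ y) hdm hdb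
  have main2 := main.add_const (∫ y, Fσ y ∂unif)
  have hlimeq : (1/2) * (∫ y, (Fτ y - Fσ y) ∂unif) + (∫ y, Fσ y ∂unif)
      = (1/2) * (∫ y, Fτ y ∂unif) + (1/2) * (∫ y, Fσ y ∂unif) := by
    rw [integral_sub hiτ hiσ]; ring
  rw [hlimeq] at main2
  refine main2.congr fun n => ?_
  have hint : ∀ y, (Fτ y - Fσ y) * rad ((1/2:ℝ)^n) y + Fσ y
      = f y * (if (if Even ⌊y / (1/2:ℝ)^n⌋ then τ y else σ y) = t then (1:ℝ) else 0) := by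
    intro y
    by_cases he : Even ⌊y / (1/2:ℝ)^n⌋
    · simp only [rad, hFτ, hFσ, if_pos he]; ring
    · simp only [rad, hFτ, hFσ, if_neg he]; ring
  have hia : Integrable (fun y => (Fτ y - Fσ y) * rad ((1/2:ℝ)^n) y) unif := by
    have := Integrable.bdd_mul (hiτ.sub hiσ) (measurable_rad ((1/2:ℝ)^n)).aestronglyMeasurable
      (Filter.Eventually.of_forall (fun y => by simpa [Real.norm_eq_abs] using abs_rad_le ((1/2:ℝ)^n) y))
    exact this.congr (Filter.Eventually.of_forall fun y => mul_comm _ _)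
  calc (∫ y, (Fτ y - Fσ y) * rad ((1/2:ℝ)^n) y ∂unif) + (∫ y, Fσ y ∂unif)
      = ∫ y, ((Fτ y - Fσ y) * rad ((1/2:ℝ)^n) y + Fσ y) ∂unif := (integral_add hia hiσ).symm
    _ = _ := integral_congr_ae (Filter.Eventually.of_forall hint)

end GsetAux2

namespace GsetAux3

open Filter Set GsetAux GsetAux2

abbrev E (m K : ℕ) := EuclideanSpace ℝ ((Fin K × Fin m) ⊕ Fin K)

lemma half_add_half_mem_closure {m K : ℕ} (w : ℝ → ℝ → ℝ)
    (hw_meas : Measurable (Function.uncurry w)) (hw : ∀ a b, w a b ∈ Set.Icc (0:ℝ) 1)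
    (x : Fin m → ℝ) {τ σ : ℝ → Fin K} (hτ : Measurable τ) (hσ : Measurable σ) :
    (1/2 : ℝ) • GTauVec w x τ + (1/2 : ℝ) • GTauVec w x σ ∈ closure (Gset w x) := by
  set ρ : ℕ → ℝ → Fin K := fun n y => if Even ⌊y / (1/2:ℝ)^n⌋ then τ y else σ y with hρdef
  have hρmeas : ∀ n, Measurable (ρ n) := by
    intro n
    refine Measurable.ite ?_ hτ hσ
    have hm : Measurable fun y : ℝ => ⌊y / (1/2:ℝ)^n⌋ := (measurable_id.div_const _).floor
    exact hm (show MeasurableSet {k : ℤ | Even k} from trivial)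
  suffices htd : Tendsto (fun n : ℕ => GTauVec w x (ρ n)) atTop
      (nhds ((1/2 : ℝ) • GTauVec w x τ + (1/2 : ℝ) • GTauVec w x σ)) by
    exact mem_closure_of_tendsto htd
      (Filter.Eventually.of_forall fun n => (⟨ρ n, hρmeas n, rfl⟩ :
        GTauVec w x (ρ n) ∈ Gset w x))
  set e := EuclideanSpace.equiv ((Fin K × Fin m) ⊕ Fin K) ℝ with hedef
  set L := (1/2 : ℝ) • GTauVec w x τ + (1/2 : ℝ) • GTauVec w x σ with hLdef
  have key : ∀ (j : (Fin K × Fin m) ⊕ Fin K),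
      Tendsto (fun n => (e (GTauVec w x (ρ n))) j) atTop (nhds ((e L) j)) := by
    have hLco : ∀ j, (e L) j
        = (1/2 : ℝ) * (Sum.elim (fun q => gTau w x τ q.1 q.2 / Real.sqrt m) (piTau τ)) j
          + (1/2 : ℝ) * (Sum.elim (fun q => gTau w x σ q.1 q.2 / Real.sqrt m) (piTau σ)) j := by
      intro j
      rw [hLdef]
      rw [map_add, _root_.map_smul, _root_.map_smul]
      show ((1/2 : ℝ) • (e (GTauVec w x τ)) + (1/2 : ℝ) • (e (GTauVec w x σ))) j = _
      rw [GTauVec, GTauVec, hedef]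
      rw [ContinuousLinearEquiv.apply_symm_apply, ContinuousLinearEquiv.apply_symm_apply]
      simp [Pi.add_apply, Pi.smul_apply, smul_eq_mul]
    have hρco : ∀ n j, (e (GTauVec w x (ρ n))) j
        = (Sum.elim (fun q => gTau w x (ρ n) q.1 q.2 / Real.sqrt m) (piTau (ρ n))) j := by
      intro n j
      rw [GTauVec, hedef, ContinuousLinearEquiv.apply_symm_apply]
    intro j
    simp only [hρco, hLco]
    rcases j with ⟨t, i⟩ | t
    · simp only [Sum.elim_inl]
      have hwm : Measurable (w (x i)) :=
        hw_meas.comp (measurable_const.prodMk measurable_id)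
      have hco := tendsto_coord (w (x i)) hwm (fun y => (hw (x i) y).1) (fun y => (hw (x i) y).2)
        hτ hσ t
      have := hco.div_const (Real.sqrt m)
      have heq : (1/2 * (∫ y, w (x i) y * (if τ y = t then (1:ℝ) else 0) ∂unif)
          + 1/2 * (∫ y, w (x i) y * (if σ y = t then (1:ℝ) else 0) ∂unif)) / Real.sqrt m
          = 1/2 * (gTau w x τ t i / Real.sqrt m) + 1/2 * (gTau w x σ t i / Real.sqrt m) := by
        rw [gTau, gTau]; ring
      rw [heq] at this
      exact this
    · simp only [Sum.elim_inr]
      have hco := tendsto_coord (K := K) (fun _ => (1:ℝ)) measurable_const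
        (fun _ => zero_le_one) (fun _ => le_refl 1) hτ hσ t
      simp only [one_mul] at hco
      simp only [piTau, hρdef]
      exact hco
  have hpi : Tendsto (fun n => e (GTauVec w x (ρ n))) atTop (nhds (e L)) :=
    tendsto_pi_nhds.mpr key
  have := ((e.symm.continuous.tendsto _).comp hpi)
  simpa [Function.comp_def] using this

lemma closure_Gset_convex {m K : ℕ} (w : ℝ → ℝ → ℝ)
    (hw_meas : Measurable (Function.uncurry w)) (hw : ∀ a b, w a b ∈ Set.Icc (0:ℝ) 1)
    (x : Fin m → ℝ) :
    Convex ℝ (closure (Gset (m := m) (K := K) w x)) := by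
  set S := closure (Gset (m := m) (K := K) w x) with hSdef
  have midS : ∀ u ∈ S, ∀ v ∈ S, (1/2:ℝ) • u + (1/2:ℝ) • v ∈ S := by
    intro u hu v hv
    have hcontf : Continuous (fun p : E m K × E m K => (1/2:ℝ) • p.1 + (1/2:ℝ) • p.2) :=
      by fun_prop
    have himg : (fun p : E m K × E m K => (1/2:ℝ) • p.1 + (1/2:ℝ) • p.2) ''
        (Gset w x ×ˢ Gset w x) ⊆ S := by
      rintro _ ⟨⟨a, b⟩, ⟨⟨τ, hτ, rfl⟩, ⟨σ, hσ, rfl⟩⟩, rfl⟩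
      exact half_add_half_mem_closure w hw_meas hw x hτ hσ
    have hmem : (u, v) ∈ closure (Gset w x ×ˢ Gset w x) := by
      rw [closure_prod_eq]; exact ⟨hu, hv⟩
    have h1 := image_closure_subset_closure_image (s := Gset w x ×ˢ Gset w x) hcontf
      (Set.mem_image_of_mem _ hmem)
    exact (closure_minimal himg isClosed_closure) h1
  intro u hu v hv a b ha hb hab
  have ha1 : a ≤ 1 := by linarith
  have hb' : b = 1 - a := by linarith
  subst hb'
  have dyadic : ∀ n : ℕ, ∀ k : ℕ, k ≤ 2^n → ((k:ℝ)/2^n) • u + (1 - (k:ℝ)/2^n) • v ∈ S := by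
    intro n
    induction n with
    | zero =>
      intro k hk
      interval_cases k
      · simpa using hv
      · simpa using hu
    | succ n ih =>
      intro k hk
      have h2p : (2:ℕ)^(n+1) = 2*2^n := by ring
      have h1 : k/2 ≤ 2^n := by omega
      have h2 : k - k/2 ≤ 2^n := by omega
      have hA := ih (k/2) h1
      have hB := ih (k - k/2) h2
      have hmid := midS _ hA _ hB
      have hks : ((k/2 : ℕ) : ℝ) + ((k - k/2 : ℕ) : ℝ) = (k : ℝ) := by
        have hn : k/2 + (k - k/2) = k := by omega
        exact_mod_cast congrArg (fun z : ℕ => (z:ℝ)) hn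
      have hpow : ((2:ℝ)^(n+1)) = 2^n * 2 := by ring
      have h2n : ((2:ℝ)^n) ≠ 0 := by positivity
      have hcomb : ∀ (α β : ℝ), (1/2:ℝ) • (α • u + (1-α) • v) + (1/2:ℝ) • (β • u + (1-β) • v)
          = ((α+β)/2) • u + (1-(α+β)/2) • v := by
        intro α β
        match_scalars <;> ring
      rw [hcomb] at hmid
      have hsc : (((k/2 : ℕ) : ℝ)/2^n + ((k - k/2 : ℕ) : ℝ)/2^n)/2 = (k:ℝ)/2^(n+1) := by
        rw [← add_div, hks, div_div, ← hpow]
      rw [hsc] at hmid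
      exact hmid
  set c : ℕ → ℝ := fun n => (⌊a * 2^n⌋₊ : ℝ) / 2^n with hcdef
  have hcmem : ∀ n, (c n) • u + (1 - c n) • v ∈ S := by
    intro n
    apply dyadic n ⌊a * 2^n⌋₊
    have hle : a * 2^n ≤ ((2^n : ℕ) : ℝ) := by
      push_cast
      nlinarith [pow_pos (show (0:ℝ) < 2 by norm_num) n]
    calc ⌊a * 2^n⌋₊ ≤ ⌊((2^n : ℕ) : ℝ)⌋₊ := Nat.floor_le_floor hle
      _ = 2^n := Nat.floor_natCast _
  have hc : Tendsto c atTop (nhds a) := by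
    have h1 := tendsto_nat_floor_mul_div_atTop (R := ℝ) ha
    have h2 : Tendsto (fun n : ℕ => (2:ℝ)^n) atTop atTop :=
      tendsto_pow_atTop_atTop_of_one_lt (by norm_num)
    exact h1.comp h2
  have hmap : Continuous fun r : ℝ => r • u + (1 - r) • v :=
    (continuous_id.smul continuous_const).add
      ((continuous_const.sub continuous_id).smul continuous_const)
  have hlim : Tendsto (fun n => (c n) • u + (1 - c n) • v) atTop (nhds (a • u + (1 - a) • v)) :=
    (hmap.tendsto a).comp hc
  exact isClosed_closure.mem_of_tendsto hlim (Filter.Eventually.of_forall hcmem)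

end GsetAux3

/-- For every `G*` in the convex hull of `𝒢` there is a sequence of elements
of `𝒢` converging to it in norm; equivalently, `d_Haus(conv 𝒢, 𝒢) = 0`. -/
theorem Gset_essentially_convex
    (m K : ℕ) (hK : 1 ≤ K)
    (w : ℝ → ℝ → ℝ) (hw_meas : Measurable (Function.uncurry w))
    (hw : ∀ x y, w x y ∈ Set.Icc (0:ℝ) 1)
    (x : Fin m → ℝ) (hx : ∀ i, x i ∈ Set.Icc (0:ℝ) 1) :
    (∀ Gstar ∈ convexHull ℝ (Gset (m := m) (K := K) w x),
      ∃ G : ℕ → EuclideanSpace ℝ ((Fin K × Fin m) ⊕ Fin K),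
        (∀ ℓ, G ℓ ∈ Gset (m := m) (K := K) w x) ∧
        Filter.Tendsto (fun ℓ => ‖Gstar - G ℓ‖) Filter.atTop (nhds 0)) ∧
    Metric.hausdorffDist (convexHull ℝ (Gset (m := m) (K := K) w x))
      (Gset (m := m) (K := K) w x) = 0 := by
  have hconv : convexHull ℝ (Gset (m := m) (K := K) w x)
      ⊆ closure (Gset (m := m) (K := K) w x) :=
    convexHull_min subset_closure (GsetAux3.closure_Gset_convex w hw_meas hw x)
  constructor
  · intro Gstar hG
    obtain ⟨G, hGmem, hGlim⟩ := mem_closure_iff_seq_limit.mp (hconv hG)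
    refine ⟨G, hGmem, ?_⟩
    have h1 := (tendsto_const_nhds (x := Gstar)).sub hGlim
    rw [sub_self] at h1
    simpa using h1.norm
  · have hcl : closure (convexHull ℝ (Gset (m := m) (K := K) w x))
        = closure (Gset (m := m) (K := K) w x) :=
      subset_antisymm (closure_minimal hconv isClosed_closure)
        (closure_mono (subset_convexHull ℝ _))
    have he : EMetric.hausdorffEdist (convexHull ℝ (Gset (m := m) (K := K) w x))
        (Gset (m := m) (K := K) w x) = 0 :=
      EMetric.hausdorffEdist_zero_iff_closure_eq_closure.mpr hcl
    simp [Metric.hausdorffDist, show Metric.hausdorffEDist _ _ = (0:ENNReal) from he]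


end
end

section
/- With the dot-product-plus-blockmodel parameterization: if S=(U,B), S̄=(U,B̄), T=(V,D), T̄=(V,D̄) satisfy ‖B_i − B̄_i‖ ≤ ε for all i∈[m] and ‖D_j − D̄_j‖ ≤ ε for all j∈[n], and measurable σ=(μ,β), σ̄=(μ,β̄), τ=(ν,δ), τ̄=(ν,δ̄) satisfy ‖β(x)−β̄(x)‖ ≤ ε and ‖δ(y)−δ̄(y)‖ ≤ ε pointwise, then for every θ∈Θ: |R_A(S,T;θ) − R_A(S̄,T̄;θ)| ≤ 12ε, |R_ω(S,τ;θ) − R_ω(S̄,τ;θ)| ≤ 12ε, |R_ω(σ,τ;θ) − R_ω(σ,τ̄;θ)| ≤ 12ε; and the CDF differences satisfy ‖Ψ_S − Ψ_{S̄}‖² ≤ Kdε, ‖Ψ_T − Ψ_{T̄}‖² ≤ Kdε, ‖Ψ_σ − Ψ_{σ̄}‖² ≤ Kdε, ‖Ψ_τ − Ψ_{τ̄}‖² ≤ Kdε. -/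
open MeasureTheory

noncomputable section

/-- The set `𝒟 = {c ∈ [0,1)^d : ‖c‖ ≤ 1}`. -/
def Dset (d : ℕ) : Set (Fin d → ℝ) :=
  {c | (∀ r, 0 ≤ c r ∧ c r < 1) ∧ Real.sqrt (∑ r : Fin d, (c r) ^ 2) ≤ 1}

/-- Latent variable space `𝒮 = 𝒯 = [K] × ℝ^d`. -/
abbrev SType (K d : ℕ) : Type := Fin K × (Fin d → ℝ)

/-- `ω_θ((u,b),(v,c)) = bᵀc · θ_{uv}`. -/
def wTheta {K d : ℕ} (θ : Fin K → Fin K → ℝ) (s t : SType K d) : ℝ :=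
  (∑ r : Fin d, s.2 r * t.2 r) * θ s.1 t.1

/-- Empirical risk `R_A(S,T;θ)` for a given data matrix `A`. -/
def RAmat {m n K d : ℕ} (A : Fin m → Fin n → ℝ)
    (S : Fin m → SType K d) (T : Fin n → SType K d) (θ : Fin K → Fin K → ℝ) : ℝ :=
  (1 / ((n : ℝ) * m)) * ∑ i : Fin m, ∑ j : Fin n, (A i j - wTheta θ (S i) (T j)) ^ 2

/-- Population risk `R_ω(S,τ;θ)` (rows fixed at `x_1,…,x_m`). -/
def ROmS {m K d : ℕ} (w : ℝ → ℝ → ℝ) (x : Fin m → ℝ)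
    (S : Fin m → SType K d) (τ : ℝ → SType K d) (θ : Fin K → Fin K → ℝ) : ℝ :=
  (1 / (m : ℝ)) * ∑ i : Fin m, ∫ y, (w (x i) y - wTheta θ (S i) (τ y)) ^ 2 ∂unif

/-- Population risk `R_ω(σ,τ;θ)`. -/
def ROmSig {K d : ℕ} (w : ℝ → ℝ → ℝ)
    (σ : ℝ → SType K d) (τ : ℝ → SType K d) (θ : Fin K → Fin K → ℝ) : ℝ :=
  ∫ x, (∫ y, (w x y - wTheta θ (σ x) (τ y)) ^ 2 ∂unif) ∂unif

open Classical in
/-- Empirical latent-variable CDF `Ψ_S(k,c)` (also used for `Ψ_T`). -/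
def PsiT {n K d : ℕ} (T : Fin n → SType K d) (k : Fin K) (c : Fin d → ℝ) : ℝ :=
  (1 / (n : ℝ)) * ∑ j : Fin n,
    if (T j).1 ≤ k ∧ (∀ r, (T j).2 r ≤ c r) then 1 else 0

open Classical in
/-- Population latent-variable CDF `Ψ_σ(k,c)` (also used for `Ψ_τ`). -/
def PsiTau {K d : ℕ} (τ : ℝ → SType K d) (k : Fin K) (c : Fin d → ℝ) : ℝ :=
  ∫ y, (if (τ y).1 ≤ k ∧ (∀ r, (τ y).2 r ≤ c r) then (1:ℝ) else 0) ∂unif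

/-- The uniform measure on `[0,1)^d`. -/
def unifD (d : ℕ) : Measure (Fin d → ℝ) :=
  Measure.pi fun _ : Fin d => volume.restrict (Set.Ico (0:ℝ) 1)

/-- Squared norm `‖Ψ‖² = Σ_k ∫_{[0,1)^d} Ψ(k,c)² dc`. -/
def PsiNormSq {K d : ℕ} (Ψ : Fin K → (Fin d → ℝ) → ℝ) : ℝ :=
  ∑ k : Fin K, ∫ c, (Ψ k c) ^ 2 ∂(unifD d)



section AuxLemmas

lemma abs_sum_mul_le {d : ℕ} (f g : Fin d → ℝ) :
    |∑ r : Fin d, f r * g r| ≤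
      Real.sqrt (∑ r : Fin d, f r ^ 2) * Real.sqrt (∑ r : Fin d, g r ^ 2) := by
  have h := Finset.sum_mul_sq_le_sq_mul_sq Finset.univ f g
  rw [← Real.sqrt_sq_eq_abs, ← Real.sqrt_mul (by positivity)]
  exact Real.sqrt_le_sqrt h

lemma coord_close {d : ℕ} {f : Fin d → ℝ} {ε : ℝ}
    (h : Real.sqrt (∑ r : Fin d, (f r) ^ 2) ≤ ε) (r : Fin d) : |f r| ≤ ε := by
  calc |f r| = Real.sqrt ((f r) ^ 2) := (Real.sqrt_sq_eq_abs _).symm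
    _ ≤ Real.sqrt (∑ r : Fin d, (f r) ^ 2) := by
        apply Real.sqrt_le_sqrt
        exact Finset.single_le_sum (fun i _ => sq_nonneg (f i)) (Finset.mem_univ r)
    _ ≤ ε := h

lemma dot_mem {d : ℕ} {b c : Fin d → ℝ} (hb : b ∈ Dset d) (hc : c ∈ Dset d) :
    (∑ r : Fin d, b r * c r) ∈ Set.Icc (0:ℝ) 1 := by
  constructor
  · exact Finset.sum_nonneg fun r _ => mul_nonneg (hb.1 r).1 (hc.1 r).1
  · calc (∑ r : Fin d, b r * c r) ≤ |∑ r : Fin d, b r * c r| := le_abs_self _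
      _ ≤ Real.sqrt (∑ r : Fin d, b r ^ 2) * Real.sqrt (∑ r : Fin d, c r ^ 2) :=
          abs_sum_mul_le _ _
      _ ≤ 1 * 1 := mul_le_mul hb.2 hc.2 (Real.sqrt_nonneg _) (by linarith [hb.2, Real.sqrt_nonneg (∑ r : Fin d, b r ^ 2)])
      _ = 1 := by ring

lemma key_pointwise {d : ℕ} {ε : ℝ} (hε : 0 ≤ ε) {a θv : ℝ}
    (ha : a ∈ Set.Icc (0:ℝ) 1) (hθv : θv ∈ Set.Icc (0:ℝ) 1)
    {b bb c cb : Fin d → ℝ} (hb : b ∈ Dset d) (hbb : bb ∈ Dset d)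
    (hc : c ∈ Dset d) (hcb : cb ∈ Dset d)
    (h1 : Real.sqrt (∑ r : Fin d, (b r - bb r) ^ 2) ≤ ε)
    (h2 : Real.sqrt (∑ r : Fin d, (c r - cb r) ^ 2) ≤ ε) :
    |(a - (∑ r : Fin d, b r * c r) * θv) ^ 2
      - (a - (∑ r : Fin d, bb r * cb r) * θv) ^ 2| ≤ 4 * ε := by
  set p := ∑ r : Fin d, b r * c r with hp
  set q := ∑ r : Fin d, bb r * cb r with hq
  have hpm := dot_mem hb hc
  have hqm := dot_mem hbb hcb
  have hsplit : p - q = (∑ r : Fin d, (b r - bb r) * c r)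
      + ∑ r : Fin d, bb r * (c r - cb r) := by
    rw [hp, hq, ← Finset.sum_add_distrib, ← Finset.sum_sub_distrib]
    congr 1; ext r; ring
  have hb1 : |∑ r : Fin d, (b r - bb r) * c r| ≤ ε := by
    calc _ ≤ Real.sqrt (∑ r : Fin d, (b r - bb r) ^ 2) *
          Real.sqrt (∑ r : Fin d, c r ^ 2) := abs_sum_mul_le _ _
      _ ≤ ε * 1 := mul_le_mul h1 hc.2 (Real.sqrt_nonneg _) hε
      _ = ε := by ring
  have hb2 : |∑ r : Fin d, bb r * (c r - cb r)| ≤ ε := by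
    have : (∑ r : Fin d, bb r * (c r - cb r)) = ∑ r : Fin d, (c r - cb r) * bb r := by
      congr 1; ext r; ring
    rw [this]
    calc _ ≤ Real.sqrt (∑ r : Fin d, (c r - cb r) ^ 2) *
          Real.sqrt (∑ r : Fin d, bb r ^ 2) := abs_sum_mul_le _ _
      _ ≤ ε * 1 := mul_le_mul h2 hbb.2 (Real.sqrt_nonneg _) hε
      _ = ε := by ring
  have hpq : |p - q| ≤ 2 * ε := by
    calc |p - q| = |(∑ r : Fin d, (b r - bb r) * c r)
        + ∑ r : Fin d, bb r * (c r - cb r)| := by rw [hsplit]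
      _ ≤ _ := abs_add_le _ _
      _ ≤ 2 * ε := by linarith
  obtain ⟨hp0, hp1⟩ := hpm
  obtain ⟨hq0, hq1⟩ := hqm
  obtain ⟨ha0, ha1⟩ := ha
  obtain ⟨ht0, ht1⟩ := hθv
  have keyeq : (a - p * θv) ^ 2 - (a - q * θv) ^ 2
      = ((q - p) * θv) * (2 * a - (p + q) * θv) := by ring
  have hfac1 : |(q - p) * θv| ≤ 2 * ε := by
    rw [abs_mul]
    calc |q - p| * |θv| ≤ (2 * ε) * 1 := by
          apply mul_le_mul _ _ (abs_nonneg _) (by positivity)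
          · rw [abs_sub_comm]; exact hpq
          · rw [abs_of_nonneg ht0]; exact ht1
      _ = 2 * ε := by ring
  have hs0 : 0 ≤ (p + q) * θv := mul_nonneg (by linarith) ht0
  have hs1 : (p + q) * θv ≤ 2 := by nlinarith
  have hfac2 : |2 * a - (p + q) * θv| ≤ 2 := abs_le.mpr ⟨by linarith, by linarith⟩
  calc |(a - p * θv) ^ 2 - (a - q * θv) ^ 2|
      = |(q - p) * θv| * |2 * a - (p + q) * θv| := by rw [keyeq, abs_mul]
    _ ≤ (2 * ε) * 2 := mul_le_mul hfac1 hfac2 (abs_nonneg _) (by positivity)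
    _ = 4 * ε := by ring


instance : IsProbabilityMeasure unif :=
  ⟨by simp [unif, Real.volume_Icc]⟩

instance : IsProbabilityMeasure (volume.restrict (Set.Ico (0:ℝ) 1)) :=
  ⟨by simp [Real.volume_Ico]⟩

instance (d : ℕ) : IsProbabilityMeasure (unifD d) := by
  unfold unifD; infer_instance

lemma coord_integral {d : ℕ} (r : Fin d) {a ab ε : ℝ} (hab : |a - ab| ≤ ε) :
    ∫ c, |(if a ≤ c r then (1:ℝ) else 0) - (if ab ≤ c r then (1:ℝ) else 0)| ∂(unifD d) ≤ ε := by
  have hε : 0 ≤ ε := le_trans (abs_nonneg _) hab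
  set J : Set ℝ := Set.Ico (min a ab) (max a ab) with hJ
  have hfun : ∀ c : Fin d → ℝ,
      |(if a ≤ c r then (1:ℝ) else 0) - (if ab ≤ c r then (1:ℝ) else 0)|
        = Set.indicator ((Function.eval r : (Fin d → ℝ) → ℝ) ⁻¹' J) (fun _ => (1:ℝ)) c := by
    intro c
    have hmem : (c ∈ (Function.eval r : (Fin d → ℝ) → ℝ) ⁻¹' J) ↔ (a ⊓ ab ≤ c r ∧ c r < a ⊔ ab) := by
      simp [hJ, Set.mem_Ico, Function.eval]
    by_cases h1 : a ≤ c r <;> by_cases h2 : ab ≤ c r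
    · have hn : ¬(a ⊓ ab ≤ c r ∧ c r < a ⊔ ab) :=
        fun h => absurd h.2 (not_lt.mpr (sup_le h1 h2))
      rw [if_pos h1, if_pos h2, Set.indicator_of_notMem (fun h => hn (hmem.mp h))]; simp
    · have hm : a ⊓ ab ≤ c r ∧ c r < a ⊔ ab :=
        ⟨inf_le_left.trans h1, lt_sup_iff.mpr (Or.inr (lt_of_not_ge h2))⟩
      rw [if_pos h1, if_neg h2, Set.indicator_of_mem (hmem.mpr hm)]; simp
    · have hm : a ⊓ ab ≤ c r ∧ c r < a ⊔ ab :=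
        ⟨inf_le_right.trans h2, lt_sup_iff.mpr (Or.inl (lt_of_not_ge h1))⟩
      rw [if_neg h1, if_pos h2, Set.indicator_of_mem (hmem.mpr hm)]; simp
    · have hn : ¬(a ⊓ ab ≤ c r ∧ c r < a ⊔ ab) :=
        fun h => absurd h.1 (not_le.mpr (lt_inf_iff.mpr ⟨lt_of_not_ge h1, lt_of_not_ge h2⟩))
      rw [if_neg h1, if_neg h2, Set.indicator_of_notMem (fun h => hn (hmem.mp h))]; simp
  have hJm : MeasurableSet J := by rw [hJ]; exact measurableSet_Ico
  have hmeasJ : MeasurableSet ((Function.eval r : (Fin d → ℝ) → ℝ) ⁻¹' J) := by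
    have hm : Measurable (Function.eval r : (Fin d → ℝ) → ℝ) := measurable_pi_apply r
    exact hm hJm
  calc ∫ c, |(if a ≤ c r then (1:ℝ) else 0) - (if ab ≤ c r then (1:ℝ) else 0)| ∂(unifD d)
      = ∫ c, Set.indicator ((Function.eval r : (Fin d → ℝ) → ℝ) ⁻¹' J) (fun _ => (1:ℝ)) c ∂(unifD d) := by
        exact integral_congr_ae (Filter.Eventually.of_forall hfun)
    _ = ((unifD d) ((Function.eval r : (Fin d → ℝ) → ℝ) ⁻¹' J)).toReal := by
        rw [show (fun _ : Fin d → ℝ => (1:ℝ)) = 1 from rfl]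
        exact integral_indicator_one hmeasJ
    _ ≤ ε := by
        have hset : (Function.eval r : (Fin d → ℝ) → ℝ) ⁻¹' J
            = Set.pi Set.univ (Function.update (fun _ : Fin d => (Set.univ : Set ℝ)) r J) := by
          ext c
          constructor
          · intro h i _
            by_cases hi : i = r
            · subst hi; simpa [Function.update_self] using h
            · simp [Function.update_of_ne hi]
          · intro h
            have := h r (Set.mem_univ r)
            simpa [Function.update_self] using this
        rw [hset, unifD, Measure.pi_pi]
        have hprod : (∏ i : Fin d,
            (volume.restrict (Set.Ico (0:ℝ) 1)) (Function.update (fun _ : Fin d => (Set.univ : Set ℝ)) r J i))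
            = (volume.restrict (Set.Ico (0:ℝ) 1)) J := by
          rw [Finset.prod_eq_single r]
          · rw [Function.update_self]
          · intro i _ hi
            rw [Function.update_of_ne hi]
            simp [Real.volume_Ico]
          · simp
        rw [hprod, Measure.restrict_apply measurableSet_Ico]
        have h1 : volume (J ∩ Set.Ico (0:ℝ) 1) ≤ ENNReal.ofReal (max a ab - min a ab) := by
          calc volume (J ∩ Set.Ico (0:ℝ) 1) ≤ volume J := measure_mono Set.inter_subset_left
            _ = ENNReal.ofReal (max a ab - min a ab) := Real.volume_Ico
        calc (volume (J ∩ Set.Ico (0:ℝ) 1)).toReal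
            ≤ (ENNReal.ofReal (max a ab - min a ab)).toReal := by
              apply ENNReal.toReal_mono (by simp) h1
          _ = max a ab - min a ab := ENNReal.toReal_ofReal (by simp [min_le_max])
          _ = |a - ab| := by rw [max_sub_min_eq_abs, abs_sub_comm]
          _ ≤ ε := hab


open Classical in
lemma indicator_box_diff {K d : ℕ} (k u : Fin K) (b bb cf : Fin d → ℝ) :
    |(if u ≤ k ∧ ∀ r, b r ≤ cf r then (1:ℝ) else 0)
      - (if u ≤ k ∧ ∀ r, bb r ≤ cf r then 1 else 0)|
    ≤ ∑ r : Fin d, |(if b r ≤ cf r then (1:ℝ) else 0)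
      - (if bb r ≤ cf r then 1 else 0)| := by
  have hnn : (0:ℝ) ≤ ∑ r : Fin d, |(if b r ≤ cf r then (1:ℝ) else 0)
      - (if bb r ≤ cf r then 1 else 0)| := Finset.sum_nonneg fun r _ => abs_nonneg _
  by_cases h1 : ∀ r, b r ≤ cf r <;> by_cases h2 : ∀ r, bb r ≤ cf r
  · have heq : (if u ≤ k ∧ ∀ r, b r ≤ cf r then (1:ℝ) else 0)
        = (if u ≤ k ∧ ∀ r, bb r ≤ cf r then 1 else 0) := by simp [h1, h2]
    rw [heq, sub_self, abs_zero]; exact hnn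
  · obtain ⟨r0, hr0⟩ := not_forall.mp h2
    have hterm : |(if b r0 ≤ cf r0 then (1:ℝ) else 0)
        - (if bb r0 ≤ cf r0 then 1 else 0)| = 1 := by
      rw [if_pos (h1 r0), if_neg hr0]; simp
    calc |(if u ≤ k ∧ ∀ r, b r ≤ cf r then (1:ℝ) else 0)
          - (if u ≤ k ∧ ∀ r, bb r ≤ cf r then 1 else 0)|
        ≤ 1 := by
          rw [show (if u ≤ k ∧ ∀ r, bb r ≤ cf r then (1:ℝ) else 0) = 0 from
            if_neg (fun hc => h2 hc.2), sub_zero]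
          split_ifs <;> simp
      _ = _ := hterm.symm
      _ ≤ _ := Finset.single_le_sum
          (f := fun r => |(if b r ≤ cf r then (1:ℝ) else 0) - (if bb r ≤ cf r then 1 else 0)|)
          (fun r _ => abs_nonneg _) (Finset.mem_univ r0)
  · obtain ⟨r0, hr0⟩ := not_forall.mp h1
    have hterm : |(if b r0 ≤ cf r0 then (1:ℝ) else 0)
        - (if bb r0 ≤ cf r0 then 1 else 0)| = 1 := by
      rw [if_neg hr0, if_pos (h2 r0)]; simp
    calc |(if u ≤ k ∧ ∀ r, b r ≤ cf r then (1:ℝ) else 0)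
          - (if u ≤ k ∧ ∀ r, bb r ≤ cf r then 1 else 0)|
        ≤ 1 := by
          rw [show (if u ≤ k ∧ ∀ r, b r ≤ cf r then (1:ℝ) else 0) = 0 from
            if_neg (fun hc => h1 hc.2), zero_sub, abs_neg]
          split_ifs <;> simp
      _ = _ := hterm.symm
      _ ≤ _ := Finset.single_le_sum
          (f := fun r => |(if b r ≤ cf r then (1:ℝ) else 0) - (if bb r ≤ cf r then 1 else 0)|)
          (fun r _ => abs_nonneg _) (Finset.mem_univ r0)
  · rw [if_neg (fun hc => h1 hc.2), if_neg (fun hc => h2 hc.2), sub_self, abs_zero]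
    exact hnn

open Classical in
lemma indicator_box_le_one {K d : ℕ} (k u : Fin K) (b bb cf : Fin d → ℝ) :
    |(if u ≤ k ∧ ∀ r, b r ≤ cf r then (1:ℝ) else 0)
      - (if u ≤ k ∧ ∀ r, bb r ≤ cf r then 1 else 0)| ≤ 1 := by
  split_ifs <;> simp

lemma meas_ind_coord {d : ℕ} (a : ℝ) (r : Fin d) :
    Measurable fun c : Fin d → ℝ => (if a ≤ c r then (1:ℝ) else 0) := by
  apply Measurable.ite _ measurable_const measurable_const
  exact measurableSet_le measurable_const (measurable_pi_apply r)

open Classical in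
lemma meas_ind_box {K d : ℕ} (k u : Fin K) (b : Fin d → ℝ) :
    Measurable fun c : Fin d → ℝ =>
      (if u ≤ k ∧ ∀ r, b r ≤ c r then (1:ℝ) else 0) := by
  apply Measurable.ite _ measurable_const measurable_const
  by_cases hu : u ≤ k
  · simp only [hu, true_and, Set.setOf_forall]
    exact MeasurableSet.iInter fun r =>
      measurableSet_le measurable_const (measurable_pi_apply r)
  · simp [hu]

lemma integrable_of_bound {d : ℕ} {f : (Fin d → ℝ) → ℝ} (hm : Measurable f)
    (C : ℝ) (hb : ∀ c, |f c| ≤ C) : Integrable f (unifD d) :=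
  (integrable_const C).mono' hm.aestronglyMeasurable
    (Filter.Eventually.of_forall fun c => by rw [Real.norm_eq_abs]; exact hb c)

lemma psiT_bound {n K d : ℕ} {ε : ℝ} (hε : 0 ≤ ε) (V : Fin n → Fin K)
    (D Dbar : Fin n → Fin d → ℝ)
    (hclose : ∀ j r, |D j r - Dbar j r| ≤ ε) :
    PsiNormSq (fun k c => PsiT (fun j => (V j, D j)) k c
      - PsiT (fun j => (V j, Dbar j)) k c) ≤ K * d * ε := by
  classical
  rcases Nat.eq_zero_or_pos n with hn | hn
  · subst hn
    have : ∀ k c, PsiT (fun j : Fin 0 => (V j, D j)) k c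
        - PsiT (fun j => (V j, Dbar j)) k c = 0 := by
      intro k c; simp [PsiT]
    unfold PsiNormSq
    calc ∑ k : Fin K, ∫ c, (PsiT (fun j : Fin 0 => (V j, D j)) k c
          - PsiT (fun j => (V j, Dbar j)) k c) ^ 2 ∂(unifD d)
        = ∑ k : Fin K, ∫ _c, (0:ℝ) ^ 2 ∂(unifD d) := by
          apply Finset.sum_congr rfl; intro k _
          apply integral_congr_ae (Filter.Eventually.of_forall fun c => by rw [this k c])
      _ = 0 := by simp
      _ ≤ K * d * ε := by positivity
  have hnR : (0:ℝ) < n := by exact_mod_cast hn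
  unfold PsiNormSq
  have key : ∀ k : Fin K, ∫ c, (PsiT (fun j => (V j, D j)) k c
      - PsiT (fun j => (V j, Dbar j)) k c) ^ 2 ∂(unifD d) ≤ d * ε := by
    intro k
    set Φ : (Fin d → ℝ) → ℝ := fun c => PsiT (fun j => (V j, D j)) k c
      - PsiT (fun j => (V j, Dbar j)) k c with hΦ
    set e : Fin n → Fin d → (Fin d → ℝ) → ℝ := fun j r c =>
      |(if D j r ≤ c r then (1:ℝ) else 0) - (if Dbar j r ≤ c r then 1 else 0)| with he
    set g : (Fin d → ℝ) → ℝ := fun c => (1 / (n:ℝ)) * ∑ j : Fin n, ∑ r : Fin d, e j r c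
      with hg
    have hΦeq : ∀ c, Φ c = (1 / (n:ℝ)) * ∑ j : Fin n,
        ((if V j ≤ k ∧ ∀ r, D j r ≤ c r then (1:ℝ) else 0)
          - (if V j ≤ k ∧ ∀ r, Dbar j r ≤ c r then 1 else 0)) := by
      intro c
      rw [hΦ]
      simp only [PsiT, Finset.sum_sub_distrib, mul_sub]
    have hΦabs : ∀ c, |Φ c| ≤ g c := by
      intro c
      rw [hΦeq c, hg, abs_mul, abs_of_nonneg (by positivity : (0:ℝ) ≤ 1 / (n:ℝ))]
      apply mul_le_mul_of_nonneg_left _ (by positivity)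
      calc |∑ j : Fin n, ((if V j ≤ k ∧ ∀ r, D j r ≤ c r then (1:ℝ) else 0)
            - (if V j ≤ k ∧ ∀ r, Dbar j r ≤ c r then 1 else 0))|
          ≤ ∑ j : Fin n, |(if V j ≤ k ∧ ∀ r, D j r ≤ c r then (1:ℝ) else 0)
            - (if V j ≤ k ∧ ∀ r, Dbar j r ≤ c r then 1 else 0)| :=
            Finset.abs_sum_le_sum_abs _ _
        _ ≤ ∑ j : Fin n, ∑ r : Fin d, e j r c :=
            Finset.sum_le_sum fun j _ => indicator_box_diff k (V j) (D j) (Dbar j) c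
    have hΦ1 : ∀ c, |Φ c| ≤ 1 := by
      intro c
      rw [hΦeq c, abs_mul, abs_of_nonneg (by positivity : (0:ℝ) ≤ 1 / (n:ℝ))]
      calc (1 / (n:ℝ)) * |∑ j : Fin n, ((if V j ≤ k ∧ ∀ r, D j r ≤ c r then (1:ℝ) else 0)
            - (if V j ≤ k ∧ ∀ r, Dbar j r ≤ c r then 1 else 0))|
          ≤ (1 / (n:ℝ)) * ∑ j : Fin n, (1:ℝ) := by
            apply mul_le_mul_of_nonneg_left _ (by positivity)
            calc _ ≤ ∑ j : Fin n, |(if V j ≤ k ∧ ∀ r, D j r ≤ c r then (1:ℝ) else 0)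
                - (if V j ≤ k ∧ ∀ r, Dbar j r ≤ c r then 1 else 0)| :=
                Finset.abs_sum_le_sum_abs _ _
              _ ≤ _ := Finset.sum_le_sum fun j _ =>
                indicator_box_le_one k (V j) (D j) (Dbar j) c
        _ = 1 := by
            rw [Finset.sum_const, Finset.card_univ, Fintype.card_fin]
            field_simp
            simp
    have hΦmeas : Measurable Φ := by
      rw [hΦ]
      apply Measurable.sub <;>
      · unfold PsiT
        exact (Finset.measurable_sum Finset.univ fun j _ => meas_ind_box k _ _).const_mul _
    have hemeas : ∀ j r, Measurable (e j r) := fun j r =>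
      ((meas_ind_coord _ r).sub (meas_ind_coord _ r)).abs
    have heint : ∀ j r, Integrable (e j r) (unifD d) := fun j r =>
      integrable_of_bound (hemeas j r) 2 fun c => by
        rw [he, abs_abs]
        have := abs_sub_abs_le_abs_sub (if D j r ≤ c r then (1:ℝ) else 0)
          (if Dbar j r ≤ c r then (1:ℝ) else 0)
        calc |(if D j r ≤ c r then (1:ℝ) else 0) - (if Dbar j r ≤ c r then 1 else 0)|
            ≤ |(if D j r ≤ c r then (1:ℝ) else 0)| + |(if Dbar j r ≤ c r then (1:ℝ) else 0)| :=
              abs_sub _ _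
          _ ≤ 1 + 1 := by
              apply add_le_add <;> (split_ifs <;> simp)
          _ = 2 := by norm_num
    have hgint : Integrable g (unifD d) := by
      rw [hg]
      apply Integrable.const_mul
      exact integrable_finset_sum _ fun j _ => integrable_finset_sum _ fun r _ => heint j r
    have hΦint2 : Integrable (fun c => (Φ c) ^ 2) (unifD d) :=
      integrable_of_bound (hΦmeas.pow_const 2) 1 fun c => by
        rw [abs_pow, sq_abs]
        calc (Φ c) ^ 2 = |Φ c| ^ 2 := (sq_abs _).symm
          _ ≤ 1 ^ 2 := by
              apply pow_le_pow_left₀ (abs_nonneg _) (hΦ1 c)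
          _ = 1 := one_pow 2
    have hΦintabs : Integrable (fun c => |Φ c|) (unifD d) :=
      integrable_of_bound hΦmeas.abs 1 fun c => by rw [abs_abs]; exact hΦ1 c
    calc ∫ c, (Φ c) ^ 2 ∂(unifD d)
        ≤ ∫ c, |Φ c| ∂(unifD d) := by
          apply integral_mono hΦint2 hΦintabs
          intro c
          calc (Φ c) ^ 2 = |Φ c| ^ 2 := (sq_abs _).symm
            _ = |Φ c| * |Φ c| := pow_two _
            _ ≤ 1 * |Φ c| := mul_le_mul_of_nonneg_right (hΦ1 c) (abs_nonneg _)
            _ = |Φ c| := one_mul _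
      _ ≤ ∫ c, g c ∂(unifD d) := integral_mono hΦintabs hgint hΦabs
      _ = (1 / (n:ℝ)) * ∑ j : Fin n, ∑ r : Fin d, ∫ c, e j r c ∂(unifD d) := by
          rw [hg]
          simp only
          rw [integral_const_mul]
          congr 1
          rw [integral_finset_sum _ fun j _ =>
            integrable_finset_sum _ fun r _ => heint j r]
          apply Finset.sum_congr rfl; intro j _
          rw [integral_finset_sum _ fun r _ => heint j r]
      _ ≤ (1 / (n:ℝ)) * ∑ j : Fin n, ∑ r : Fin d, ε := by
          apply mul_le_mul_of_nonneg_left _ (by positivity)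
          apply Finset.sum_le_sum; intro j _
          apply Finset.sum_le_sum; intro r _
          exact coord_integral r (hclose j r)
      _ = (1 / (n:ℝ)) * (n * (d * ε)) := by
          rw [Finset.sum_const, Finset.sum_const, Finset.card_univ, Finset.card_univ,
            Fintype.card_fin, Fintype.card_fin]
          simp [nsmul_eq_mul, mul_assoc]
      _ = d * ε := by field_simp
  calc ∑ k : Fin K, ∫ c, (PsiT (fun j => (V j, D j)) k c
        - PsiT (fun j => (V j, Dbar j)) k c) ^ 2 ∂(unifD d)
      ≤ ∑ _k : Fin K, (d:ℝ) * ε := Finset.sum_le_sum fun k _ => key k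
    _ = K * d * ε := by
        rw [Finset.sum_const, Finset.card_univ, Fintype.card_fin]
        simp [mul_assoc]


lemma integrable_of_bound' {α : Type*} [MeasurableSpace α] {μ : Measure α}
    [IsFiniteMeasure μ] {f : α → ℝ} (hm : AEStronglyMeasurable f μ)
    (C : ℝ) (hb : ∀ a, |f a| ≤ C) : Integrable f μ :=
  (integrable_const C).mono' hm
    (Filter.Eventually.of_forall fun a => by rw [Real.norm_eq_abs]; exact hb a)

lemma abs_if_sub_if_le_two (P Q : Prop) [Decidable P] [Decidable Q] :
    |(if P then (1:ℝ) else 0) - (if Q then (1:ℝ) else 0)| ≤ 2 := by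
  split_ifs <;> simp <;> norm_num

lemma psiTau_bound {K d : ℕ} {ε : ℝ} (hε : 0 ≤ ε) (ν : ℝ → Fin K) (hν : Measurable ν)
    (δ δbar : ℝ → Fin d → ℝ) (hδm : Measurable δ) (hδbarm : Measurable δbar)
    (hclose : ∀ z r, |δ z r - δbar z r| ≤ ε) :
    PsiNormSq (fun k c => PsiTau (fun y => (ν y, δ y)) k c
      - PsiTau (fun y => (ν y, δbar y)) k c) ≤ K * d * ε := by
  classical
  unfold PsiNormSq
  have key : ∀ k : Fin K, ∫ c, (PsiTau (fun y => (ν y, δ y)) k c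
      - PsiTau (fun y => (ν y, δbar y)) k c) ^ 2 ∂(unifD d) ≤ d * ε := by
    intro k
    -- joint indicator functions on (Fin d → ℝ) × ℝ
    set F : ((Fin d → ℝ) × ℝ) → ℝ := fun p =>
      if ν p.2 ≤ k ∧ ∀ r, δ p.2 r ≤ p.1 r then 1 else 0 with hF
    set Fb : ((Fin d → ℝ) × ℝ) → ℝ := fun p =>
      if ν p.2 ≤ k ∧ ∀ r, δbar p.2 r ≤ p.1 r then 1 else 0 with hFb
    set E : Fin d → ((Fin d → ℝ) × ℝ) → ℝ := fun r p =>
      |(if δ p.2 r ≤ p.1 r then (1:ℝ) else 0) - (if δbar p.2 r ≤ p.1 r then 1 else 0)|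
      with hE
    have hFmeas : Measurable F := by
      apply Measurable.ite _ measurable_const measurable_const
      have h1 : MeasurableSet {p : (Fin d → ℝ) × ℝ | ν p.2 ≤ k} :=
        (hν.comp measurable_snd) ((Set.toFinite {v : Fin K | v ≤ k}).measurableSet)
      have h2 : MeasurableSet {p : (Fin d → ℝ) × ℝ | ∀ r, δ p.2 r ≤ p.1 r} := by
        rw [Set.setOf_forall]
        exact MeasurableSet.iInter fun r => measurableSet_le
          ((measurable_pi_apply r).comp (hδm.comp measurable_snd))
          ((measurable_pi_apply r).comp measurable_fst)
      exact h1.inter h2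
    have hFbmeas : Measurable Fb := by
      apply Measurable.ite _ measurable_const measurable_const
      have h1 : MeasurableSet {p : (Fin d → ℝ) × ℝ | ν p.2 ≤ k} :=
        (hν.comp measurable_snd) ((Set.toFinite {v : Fin K | v ≤ k}).measurableSet)
      have h2 : MeasurableSet {p : (Fin d → ℝ) × ℝ | ∀ r, δbar p.2 r ≤ p.1 r} := by
        rw [Set.setOf_forall]
        exact MeasurableSet.iInter fun r => measurableSet_le
          ((measurable_pi_apply r).comp (hδbarm.comp measurable_snd))
          ((measurable_pi_apply r).comp measurable_fst)
      exact h1.inter h2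
    have hEmeas : ∀ r, Measurable (E r) := by
      intro r
      apply Measurable.abs
      apply Measurable.sub <;>
        apply Measurable.ite _ measurable_const measurable_const
      · exact measurableSet_le
          (((measurable_pi_apply r).comp hδm).comp measurable_snd)
          (by exact (measurable_pi_apply r).comp measurable_fst)
      · exact measurableSet_le
          (((measurable_pi_apply r).comp hδbarm).comp measurable_snd)
          (by exact (measurable_pi_apply r).comp measurable_fst)
    have hEb : ∀ r p, |E r p| ≤ 2 := fun r p => by
      rw [hE, abs_abs]; exact abs_if_sub_if_le_two _ _
    have hFb1 : ∀ p : (Fin d → ℝ) × ℝ, |F p - Fb p| ≤ 1 := fun p =>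
      indicator_box_le_one k (ν p.2) (δ p.2) (δbar p.2) p.1
    have hFdiff : ∀ p : (Fin d → ℝ) × ℝ, |F p - Fb p| ≤ ∑ r : Fin d, E r p := fun p =>
      indicator_box_diff k (ν p.2) (δ p.2) (δbar p.2) p.1
    have hFint : ∀ c, Integrable (fun y => F (c, y)) unif := fun c =>
      integrable_of_bound'
        ((hFmeas.comp (measurable_const.prodMk measurable_id)).aestronglyMeasurable)
        1 (fun y => by rw [hF]; dsimp only; split_ifs <;> simp)
    have hFbint : ∀ c, Integrable (fun y => Fb (c, y)) unif := fun c =>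
      integrable_of_bound'
        ((hFbmeas.comp (measurable_const.prodMk measurable_id)).aestronglyMeasurable)
        1 (fun y => by rw [hFb]; dsimp only; split_ifs <;> simp)
    have hEint : ∀ r c, Integrable (fun y => E r (c, y)) unif := fun r c =>
      integrable_of_bound'
        (((hEmeas r).comp (measurable_const.prodMk measurable_id)).aestronglyMeasurable)
        2 (fun y => hEb r (c, y))
    have hPsiF : (fun c => PsiTau (fun y => (ν y, δ y)) k c)
        = fun c => ∫ y, F (c, y) ∂unif := rfl
    have hPsiFb : (fun c => PsiTau (fun y => (ν y, δbar y)) k c)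
        = fun c => ∫ y, Fb (c, y) ∂unif := rfl
    set Φ : (Fin d → ℝ) → ℝ := fun c => PsiTau (fun y => (ν y, δ y)) k c
      - PsiTau (fun y => (ν y, δbar y)) k c with hΦ
    have hΦeq : ∀ c, Φ c = ∫ y, (F (c, y) - Fb (c, y)) ∂unif := by
      intro c
      rw [hΦ]
      dsimp only
      rw [integral_sub (hFint c) (hFbint c)]
      rfl
    have hΦ1 : ∀ c, |Φ c| ≤ 1 := by
      intro c
      rw [hΦeq c]
      calc |∫ y, (F (c, y) - Fb (c, y)) ∂unif| ≤ ∫ y, |F (c, y) - Fb (c, y)| ∂unif := by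
            simpa [Real.norm_eq_abs] using
              norm_integral_le_integral_norm (fun y => F (c, y) - Fb (c, y)) (μ := unif)
        _ ≤ ∫ _y, (1:ℝ) ∂unif := by
            apply integral_mono ((hFint c).sub (hFbint c)).abs (integrable_const 1)
            intro y; exact hFb1 (c, y)
        _ = 1 := by simp
    set g : (Fin d → ℝ) → ℝ := fun c => ∑ r : Fin d, ∫ y, E r (c, y) ∂unif with hg
    have hΦle : ∀ c, |Φ c| ≤ g c := by
      intro c
      rw [hΦeq c, hg]
      calc |∫ y, (F (c, y) - Fb (c, y)) ∂unif| ≤ ∫ y, |F (c, y) - Fb (c, y)| ∂unif := by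
            simpa [Real.norm_eq_abs] using
              norm_integral_le_integral_norm (fun y => F (c, y) - Fb (c, y)) (μ := unif)
        _ ≤ ∫ y, ∑ r : Fin d, E r (c, y) ∂unif := by
            apply integral_mono ((hFint c).sub (hFbint c)).abs
              (integrable_finset_sum _ fun r _ => hEint r c)
            intro y; exact hFdiff (c, y)
        _ = ∑ r : Fin d, ∫ y, E r (c, y) ∂unif :=
            integral_finset_sum _ fun r _ => hEint r c
    -- strong measurability of the partial integrals
    have hGm : StronglyMeasurable (fun c => ∫ y, F (c, y) ∂unif) :=
      hFmeas.stronglyMeasurable.integral_prod_right'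
    have hGbm : StronglyMeasurable (fun c => ∫ y, Fb (c, y) ∂unif) :=
      hFbmeas.stronglyMeasurable.integral_prod_right'
    have hΦm : StronglyMeasurable Φ := by
      rw [hΦ]
      simp only [hPsiF, hPsiFb] at *
      exact hGm.sub hGbm
    have hGrm : ∀ r, StronglyMeasurable (fun c => ∫ y, E r (c, y) ∂unif) := fun r =>
      (hEmeas r).stronglyMeasurable.integral_prod_right'
    have hGrb : ∀ r c, |∫ y, E r (c, y) ∂unif| ≤ 2 := by
      intro r c
      calc |∫ y, E r (c, y) ∂unif| ≤ ∫ y, |E r (c, y)| ∂unif := by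
            simpa [Real.norm_eq_abs] using
              norm_integral_le_integral_norm (fun y => E r (c, y)) (μ := unif)
        _ ≤ ∫ _y, (2:ℝ) ∂unif := by
            apply integral_mono (hEint r c).abs (integrable_const 2)
            intro y; exact hEb r (c, y)
        _ = 2 := by simp
    have hGrint : ∀ r, Integrable (fun c => ∫ y, E r (c, y) ∂unif) (unifD d) := fun r =>
      integrable_of_bound' (hGrm r).aestronglyMeasurable 2 (hGrb r)
    have hgint : Integrable g (unifD d) := by
      rw [hg]; exact integrable_finset_sum _ fun r _ => hGrint r
    have hΦint2 : Integrable (fun c => (Φ c) ^ 2) (unifD d) := by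
      apply integrable_of_bound' ((hΦm.mul hΦm).aestronglyMeasurable.congr
        (Filter.Eventually.of_forall fun c => (pow_two (Φ c)).symm)) 1
      intro c
      rw [abs_pow]
      calc |Φ c| ^ 2 ≤ 1 ^ 2 := by apply pow_le_pow_left₀ (abs_nonneg _) (hΦ1 c)
        _ = 1 := one_pow 2
    have hΦintabs : Integrable (fun c => |Φ c|) (unifD d) := by
      apply integrable_of_bound' ?_ 1 (fun c => by rw [abs_abs]; exact hΦ1 c)
      have := hΦm.norm
      simpa [Real.norm_eq_abs] using this.aestronglyMeasurable
    calc ∫ c, (Φ c) ^ 2 ∂(unifD d)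
        ≤ ∫ c, |Φ c| ∂(unifD d) := by
          apply integral_mono hΦint2 hΦintabs
          intro c
          calc (Φ c) ^ 2 = |Φ c| ^ 2 := (sq_abs _).symm
            _ = |Φ c| * |Φ c| := pow_two _
            _ ≤ 1 * |Φ c| := mul_le_mul_of_nonneg_right (hΦ1 c) (abs_nonneg _)
            _ = |Φ c| := one_mul _
      _ ≤ ∫ c, g c ∂(unifD d) := integral_mono hΦintabs hgint hΦle
      _ = ∑ r : Fin d, ∫ c, (∫ y, E r (c, y) ∂unif) ∂(unifD d) := by
          rw [hg]
          exact integral_finset_sum _ fun r _ => hGrint r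
      _ ≤ ∑ _r : Fin d, ε := by
          apply Finset.sum_le_sum
          intro r _
          have hswap : ∫ c, (∫ y, E r (c, y) ∂unif) ∂(unifD d)
              = ∫ y, (∫ c, E r (c, y) ∂(unifD d)) ∂unif := by
            apply integral_integral_swap
            exact integrable_of_bound' ((hEmeas r).aestronglyMeasurable) 2 (hEb r)
          rw [hswap]
          have hinner : ∀ y, ∫ c, E r (c, y) ∂(unifD d) ≤ ε := by
            intro y
            exact coord_integral r (hclose y r)
          have hinnerm : StronglyMeasurable (fun y => ∫ c, E r (c, y) ∂(unifD d)) :=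
            (hEmeas r).stronglyMeasurable.integral_prod_left'
          have hinnerb : ∀ y, |∫ c, E r (c, y) ∂(unifD d)| ≤ 2 := by
            intro y
            calc |∫ c, E r (c, y) ∂(unifD d)| ≤ ∫ c, |E r (c, y)| ∂(unifD d) := by
                  simpa [Real.norm_eq_abs] using
                    norm_integral_le_integral_norm (fun c => E r (c, y)) (μ := unifD d)
              _ ≤ ∫ _c, (2:ℝ) ∂(unifD d) := by
                  apply integral_mono ?_ (integrable_const 2)
                    (fun c => hEb r (c, y))
                  apply Integrable.abs
                  exact integrable_of_bound'
                    (((hEmeas r).comp (measurable_id.prodMk measurable_const)).aestronglyMeasurable)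
                    2 (fun c => hEb r (c, y))
              _ = 2 := by simp
          calc ∫ y, (∫ c, E r (c, y) ∂(unifD d)) ∂unif
              ≤ ∫ _y, ε ∂unif := by
                apply integral_mono
                  (integrable_of_bound' hinnerm.aestronglyMeasurable 2 hinnerb)
                  (integrable_const ε) hinner
            _ = ε := by simp
      _ = d * ε := by
          rw [Finset.sum_const, Finset.card_univ, Fintype.card_fin, nsmul_eq_mul]
  calc ∑ k : Fin K, ∫ c, (PsiTau (fun y => (ν y, δ y)) k c
        - PsiTau (fun y => (ν y, δbar y)) k c) ^ 2 ∂(unifD d)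
      ≤ ∑ _k : Fin K, (d:ℝ) * ε := Finset.sum_le_sum fun k _ => key k
    _ = K * d * ε := by
        rw [Finset.sum_const, Finset.card_univ, Fintype.card_fin]
        simp [mul_assoc]

lemma wTheta_mem {K d : ℕ} {θ : Fin K → Fin K → ℝ} (hθ : ∀ u v, θ u v ∈ Set.Icc (0:ℝ) 1)
    {u v : Fin K} {b c : Fin d → ℝ} (hb : b ∈ Dset d) (hc : c ∈ Dset d) :
    wTheta θ (u, b) (v, c) ∈ Set.Icc (0:ℝ) 1 := by
  obtain ⟨h1, h2⟩ := dot_mem hb hc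
  obtain ⟨h3, h4⟩ := hθ u v
  exact ⟨mul_nonneg h1 h3, mul_le_one₀ h2 h3 h4⟩

lemma sq_sub_le_one {a q : ℝ} (ha : a ∈ Set.Icc (0:ℝ) 1)
    (hq : q ∈ Set.Icc (0:ℝ) 1) : |(a - q) ^ 2| ≤ 1 := by
  rw [abs_of_nonneg (sq_nonneg _)]
  obtain ⟨h1, h2⟩ := ha; obtain ⟨h3, h4⟩ := hq
  nlinarith

lemma key_pointwise' {K d : ℕ} {ε : ℝ} (hε : 0 ≤ ε) {a : ℝ}
    {θ : Fin K → Fin K → ℝ} (hθ : ∀ u v, θ u v ∈ Set.Icc (0:ℝ) 1)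
    (ha : a ∈ Set.Icc (0:ℝ) 1) {u v : Fin K}
    {b bb c cb : Fin d → ℝ} (hb : b ∈ Dset d) (hbb : bb ∈ Dset d)
    (hc : c ∈ Dset d) (hcb : cb ∈ Dset d)
    (h1 : Real.sqrt (∑ r : Fin d, (b r - bb r) ^ 2) ≤ ε)
    (h2 : Real.sqrt (∑ r : Fin d, (c r - cb r) ^ 2) ≤ ε) :
    |(a - wTheta θ (u, b) (v, c)) ^ 2 - (a - wTheta θ (u, bb) (v, cb)) ^ 2| ≤ 4 * ε :=
  key_pointwise hε ha (hθ u v) hb hbb hc hcb h1 h2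

lemma sqrt_sum_self_zero {d : ℕ} {ε : ℝ} (hε : 0 ≤ ε) (f : Fin d → ℝ) :
    Real.sqrt (∑ r : Fin d, (f r - f r) ^ 2) ≤ ε := by
  simp [hε]

lemma integrable_of_bound2 {α : Type*} [MeasurableSpace α] {μ : Measure α}
    [IsFiniteMeasure μ] {f : α → ℝ} (hm : AEStronglyMeasurable f μ)
    (C : ℝ) (hb : ∀ a, |f a| ≤ C) : Integrable f μ :=
  (integrable_const C).mono' hm
    (Filter.Eventually.of_forall fun a => by rw [Real.norm_eq_abs]; exact hb a)

lemma integrand_meas {K d : ℕ} (θ : Fin K → Fin K → ℝ) (u : Fin K) (b : Fin d → ℝ)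
    (ν : ℝ → Fin K) (hν : Measurable ν) (δ : ℝ → Fin d → ℝ) (hδ : Measurable δ)
    (h : ℝ → ℝ) (hh : Measurable h) :
    Measurable fun y => (h y - wTheta θ (u, b) (ν y, δ y)) ^ 2 := by
  apply Measurable.pow_const
  apply hh.sub
  unfold wTheta
  apply Measurable.mul
  · exact Finset.measurable_sum _ fun r _ =>
      measurable_const.mul ((measurable_pi_apply r).comp hδ)
  · exact (measurable_of_countable (fun v => θ u v)).comp hν

lemma integrand_meas_joint {K d : ℕ} (θ : Fin K → Fin K → ℝ)
    (w : ℝ → ℝ → ℝ) (hw : Measurable (Function.uncurry w))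
    (μfn : ℝ → Fin K) (hμ : Measurable μfn) (β : ℝ → Fin d → ℝ) (hβ : Measurable β)
    (ν : ℝ → Fin K) (hν : Measurable ν) (δ : ℝ → Fin d → ℝ) (hδ : Measurable δ) :
    Measurable fun p : ℝ × ℝ =>
      (w p.1 p.2 - wTheta θ (μfn p.1, β p.1) (ν p.2, δ p.2)) ^ 2 := by
  apply Measurable.pow_const
  apply Measurable.sub
  · exact hw
  · unfold wTheta
    apply Measurable.mul
    · exact Finset.measurable_sum _ fun r _ =>
        ((measurable_pi_apply r).comp (hβ.comp measurable_fst)).mul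
          ((measurable_pi_apply r).comp (hδ.comp measurable_snd))
    · exact (measurable_of_countable (fun q : Fin K × Fin K => θ q.1 q.2)).comp
        ((hμ.comp measurable_fst).prodMk (hν.comp measurable_snd))

-- Part 2 style inner bound
lemma integral_diff_bound {ε : ℝ} (hε : 0 ≤ ε) {f g : ℝ → ℝ}
    (hfi : Integrable f unif) (hgi : Integrable g unif)
    (h : ∀ y, |f y - g y| ≤ 4 * ε) :
    |(∫ y, f y ∂unif) - ∫ y, g y ∂unif| ≤ 4 * ε := by
  rw [← integral_sub hfi hgi]
  calc |∫ y, (f y - g y) ∂unif| ≤ ∫ y, |f y - g y| ∂unif := by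
        simpa [Real.norm_eq_abs] using
          norm_integral_le_integral_norm (fun y => f y - g y) (μ := unif)
    _ ≤ ∫ _y, 4 * ε ∂unif := by
        apply integral_mono (hfi.sub hgi).abs (integrable_const _) h
    _ = 4 * ε := by simp


end AuxLemmas

/-- Perturbation bounds for the dot-product-plus-blockmodel: replacing
latent positions by `ε`-close ones changes the risks by at most `12ε` and the squared CDF
distances are at most `Kdε`. -/
theorem epsilon_cover_approximation
    (m n K d : ℕ) (ε : ℝ) (hε : 0 ≤ ε)
    (w : ℝ → ℝ → ℝ) (hw_meas : Measurable (Function.uncurry w))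
    (hw : ∀ x y, w x y ∈ Set.Icc (0:ℝ) 1)
    (x : Fin m → ℝ) (hx : ∀ i, x i ∈ Set.Icc (0:ℝ) 1)
    (A : Fin m → Fin n → ℝ) (hA : ∀ i j, A i j = 0 ∨ A i j = 1)
    -- `S = (U,B)`, `S̄ = (U,B̄)` with `‖B_i − B̄_i‖ ≤ ε`
    (U : Fin m → Fin K) (B Bbar : Fin m → Fin d → ℝ)
    (hB : ∀ i, B i ∈ Dset d) (hBbar : ∀ i, Bbar i ∈ Dset d)
    (hBclose : ∀ i, Real.sqrt (∑ r : Fin d, (B i r - Bbar i r) ^ 2) ≤ ε)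
    -- `T = (V,D)`, `T̄ = (V,D̄)` with `‖D_j − D̄_j‖ ≤ ε`
    (V : Fin n → Fin K) (D Dbar : Fin n → Fin d → ℝ)
    (hD : ∀ j, D j ∈ Dset d) (hDbar : ∀ j, Dbar j ∈ Dset d)
    (hDclose : ∀ j, Real.sqrt (∑ r : Fin d, (D j r - Dbar j r) ^ 2) ≤ ε)
    -- `σ = (μ,β)`, `σ̄ = (μ,β̄)` with `‖β(x) − β̄(x)‖ ≤ ε` pointwise
    (μfn : ℝ → Fin K) (hμ : Measurable μfn)
    (β βbar : ℝ → Fin d → ℝ) (hβm : Measurable β) (hβbarm : Measurable βbar)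
    (hβ : ∀ z, β z ∈ Dset d) (hβbar : ∀ z, βbar z ∈ Dset d)
    (hβclose : ∀ z, Real.sqrt (∑ r : Fin d, (β z r - βbar z r) ^ 2) ≤ ε)
    -- `τ = (ν,δ)`, `τ̄ = (ν,δ̄)` with `‖δ(y) − δ̄(y)‖ ≤ ε` pointwise
    (νfn : ℝ → Fin K) (hν : Measurable νfn)
    (δf δbar : ℝ → Fin d → ℝ) (hδm : Measurable δf) (hδbarm : Measurable δbar)
    (hδ : ∀ z, δf z ∈ Dset d) (hδbar : ∀ z, δbar z ∈ Dset d)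
    (hδclose : ∀ z, Real.sqrt (∑ r : Fin d, (δf z r - δbar z r) ^ 2) ≤ ε)
    (θ : Fin K → Fin K → ℝ) (hθ : ∀ u v, θ u v ∈ Set.Icc (0:ℝ) 1) :
    |RAmat A (fun i => (U i, B i)) (fun j => (V j, D j)) θ
      - RAmat A (fun i => (U i, Bbar i)) (fun j => (V j, Dbar j)) θ| ≤ 12 * ε ∧
    |ROmS w x (fun i => (U i, B i)) (fun y => (νfn y, δf y)) θ
      - ROmS w x (fun i => (U i, Bbar i)) (fun y => (νfn y, δf y)) θ| ≤ 12 * ε ∧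
    |ROmSig w (fun z => (μfn z, β z)) (fun y => (νfn y, δf y)) θ
      - ROmSig w (fun z => (μfn z, β z)) (fun y => (νfn y, δbar y)) θ| ≤ 12 * ε ∧
    PsiNormSq (fun k c => PsiT (fun i => (U i, B i)) k c
      - PsiT (fun i => (U i, Bbar i)) k c) ≤ K * d * ε ∧
    PsiNormSq (fun k c => PsiT (fun j => (V j, D j)) k c
      - PsiT (fun j => (V j, Dbar j)) k c) ≤ K * d * ε ∧
    PsiNormSq (fun k c => PsiTau (fun z => (μfn z, β z)) k c
      - PsiTau (fun z => (μfn z, βbar z)) k c) ≤ K * d * ε ∧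
    PsiNormSq (fun k c => PsiTau (fun y => (νfn y, δf y)) k c
      - PsiTau (fun y => (νfn y, δbar y)) k c) ≤ K * d * ε := by
  have hA' : ∀ i j, A i j ∈ Set.Icc (0:ℝ) 1 := by
    intro i j; rcases hA i j with h | h <;> rw [h] <;> constructor <;> norm_num
  refine ⟨?_, ?_, ?_,
    psiT_bound hε U B Bbar (fun i r => coord_close (hBclose i) r),
    psiT_bound hε V D Dbar (fun j r => coord_close (hDclose j) r),
    psiTau_bound hε μfn hμ β βbar hβm hβbarm (fun z r => coord_close (hβclose z) r),
    psiTau_bound hε νfn hν δf δbar hδm hδbarm (fun z r => coord_close (hδclose z) r)⟩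
  -- Part 1: RAmat
  · rcases eq_or_ne ((n:ℝ) * m) 0 with hnm | hnm
    · simp only [RAmat, hnm, div_zero, zero_mul, sub_self, abs_zero]
      positivity
    · have hn0 : (n:ℝ) ≠ 0 := fun h => hnm (by rw [h, zero_mul])
      have hm0 : (m:ℝ) ≠ 0 := fun h => hnm (by rw [h, mul_zero])
      have hre : RAmat A (fun i => (U i, B i)) (fun j => (V j, D j)) θ
          - RAmat A (fun i => (U i, Bbar i)) (fun j => (V j, Dbar j)) θ
          = (1 / ((n:ℝ) * m)) * ∑ i : Fin m, ∑ j : Fin n,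
            ((A i j - wTheta θ (U i, B i) (V j, D j)) ^ 2
              - (A i j - wTheta θ (U i, Bbar i) (V j, Dbar j)) ^ 2) := by
        unfold RAmat
        rw [← mul_sub, ← Finset.sum_sub_distrib]
        congr 1
        refine Finset.sum_congr rfl fun i _ => ?_
        rw [← Finset.sum_sub_distrib]
      rw [hre, abs_mul, abs_of_nonneg (by positivity : (0:ℝ) ≤ 1 / ((n:ℝ) * m))]
      calc (1 / ((n:ℝ) * m)) * |∑ i : Fin m, ∑ j : Fin n,
            ((A i j - wTheta θ (U i, B i) (V j, D j)) ^ 2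
              - (A i j - wTheta θ (U i, Bbar i) (V j, Dbar j)) ^ 2)|
          ≤ (1 / ((n:ℝ) * m)) * ∑ i : Fin m, ∑ j : Fin n, (4 * ε) := by
            apply mul_le_mul_of_nonneg_left _ (by positivity)
            calc |∑ i : Fin m, ∑ j : Fin n,
                  ((A i j - wTheta θ (U i, B i) (V j, D j)) ^ 2
                    - (A i j - wTheta θ (U i, Bbar i) (V j, Dbar j)) ^ 2)|
                ≤ ∑ i : Fin m, |∑ j : Fin n,
                  ((A i j - wTheta θ (U i, B i) (V j, D j)) ^ 2
                    - (A i j - wTheta θ (U i, Bbar i) (V j, Dbar j)) ^ 2)| :=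
                  Finset.abs_sum_le_sum_abs _ _
              _ ≤ ∑ i : Fin m, ∑ j : Fin n, (4 * ε) := by
                  apply Finset.sum_le_sum; intro i _
                  calc _ ≤ ∑ j : Fin n, |(A i j - wTheta θ (U i, B i) (V j, D j)) ^ 2
                        - (A i j - wTheta θ (U i, Bbar i) (V j, Dbar j)) ^ 2| :=
                      Finset.abs_sum_le_sum_abs _ _
                    _ ≤ _ := Finset.sum_le_sum fun j _ =>
                        key_pointwise' hε hθ (hA' i j) (hB i) (hBbar i) (hD j) (hDbar j)
                          (hBclose i) (hDclose j)
          _ = (1 / ((n:ℝ) * m)) * ((m:ℝ) * ((n:ℝ) * (4 * ε))) := by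
            rw [Finset.sum_const, Finset.sum_const, Finset.card_univ, Finset.card_univ,
              Fintype.card_fin, Fintype.card_fin, nsmul_eq_mul, nsmul_eq_mul]
          _ = 4 * ε := by field_simp
          _ ≤ 12 * ε := by linarith
  -- Part 2: ROmS
  · have hint1 : ∀ i : Fin m, Integrable
        (fun y => (w (x i) y - wTheta θ (U i, B i) (νfn y, δf y)) ^ 2) unif := by
      intro i
      apply integrable_of_bound2
        ((integrand_meas θ (U i) (B i) νfn hν δf hδm _ (hw_meas.comp
          (measurable_const.prodMk measurable_id))).aestronglyMeasurable) 1
      intro y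
      exact sq_sub_le_one (hw (x i) y) (wTheta_mem hθ (hB i) (hδ y))
    have hint2 : ∀ i : Fin m, Integrable
        (fun y => (w (x i) y - wTheta θ (U i, Bbar i) (νfn y, δf y)) ^ 2) unif := by
      intro i
      apply integrable_of_bound2
        ((integrand_meas θ (U i) (Bbar i) νfn hν δf hδm _ (hw_meas.comp
          (measurable_const.prodMk measurable_id))).aestronglyMeasurable) 1
      intro y
      exact sq_sub_le_one (hw (x i) y) (wTheta_mem hθ (hBbar i) (hδ y))
    rcases Nat.eq_zero_or_pos m with hm | hm
    · subst hm
      simp only [ROmS, Nat.cast_zero, div_zero, zero_mul, sub_self, abs_zero]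
      positivity
    · have hm0 : (m:ℝ) ≠ 0 := by positivity
      have hre : ROmS w x (fun i => (U i, B i)) (fun y => (νfn y, δf y)) θ
          - ROmS w x (fun i => (U i, Bbar i)) (fun y => (νfn y, δf y)) θ
          = (1 / (m:ℝ)) * ∑ i : Fin m,
            ((∫ y, (w (x i) y - wTheta θ (U i, B i) (νfn y, δf y)) ^ 2 ∂unif)
              - ∫ y, (w (x i) y - wTheta θ (U i, Bbar i) (νfn y, δf y)) ^ 2 ∂unif) := by
        unfold ROmS
        rw [← mul_sub, ← Finset.sum_sub_distrib]
      rw [hre, abs_mul, abs_of_nonneg (by positivity : (0:ℝ) ≤ 1 / (m:ℝ))]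
      calc (1 / (m:ℝ)) * |∑ i : Fin m,
            ((∫ y, (w (x i) y - wTheta θ (U i, B i) (νfn y, δf y)) ^ 2 ∂unif)
              - ∫ y, (w (x i) y - wTheta θ (U i, Bbar i) (νfn y, δf y)) ^ 2 ∂unif)|
          ≤ (1 / (m:ℝ)) * ∑ i : Fin m, (4 * ε) := by
            apply mul_le_mul_of_nonneg_left _ (by positivity)
            calc _ ≤ ∑ i : Fin m,
                |(∫ y, (w (x i) y - wTheta θ (U i, B i) (νfn y, δf y)) ^ 2 ∂unif)
                  - ∫ y, (w (x i) y - wTheta θ (U i, Bbar i) (νfn y, δf y)) ^ 2 ∂unif| :=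
                Finset.abs_sum_le_sum_abs _ _
              _ ≤ _ := by
                apply Finset.sum_le_sum; intro i _
                apply integral_diff_bound hε (hint1 i) (hint2 i)
                intro y
                exact key_pointwise' hε hθ (hw (x i) y) (hB i) (hBbar i) (hδ y) (hδ y)
                  (hBclose i) (sqrt_sum_self_zero hε _)
          _ = (1 / (m:ℝ)) * ((m:ℝ) * (4 * ε)) := by
            rw [Finset.sum_const, Finset.card_univ, Fintype.card_fin, nsmul_eq_mul]
          _ = 4 * ε := by field_simp
          _ ≤ 12 * ε := by linarith
  -- Part 3: ROmSig
  · have hFm : Measurable fun p : ℝ × ℝ =>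
        (w p.1 p.2 - wTheta θ (μfn p.1, β p.1) (νfn p.2, δf p.2)) ^ 2 :=
      integrand_meas_joint θ w hw_meas μfn hμ β hβm νfn hν δf hδm
    have hGm : Measurable fun p : ℝ × ℝ =>
        (w p.1 p.2 - wTheta θ (μfn p.1, β p.1) (νfn p.2, δbar p.2)) ^ 2 :=
      integrand_meas_joint θ w hw_meas μfn hμ β hβm νfn hν δbar hδbarm
    set F : ℝ × ℝ → ℝ := fun p =>
      (w p.1 p.2 - wTheta θ (μfn p.1, β p.1) (νfn p.2, δf p.2)) ^ 2 with hF
    set G : ℝ × ℝ → ℝ := fun p =>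
      (w p.1 p.2 - wTheta θ (μfn p.1, β p.1) (νfn p.2, δbar p.2)) ^ 2 with hG
    have hFb : ∀ p, |F p| ≤ 1 := fun p =>
      sq_sub_le_one (hw p.1 p.2) (wTheta_mem hθ (hβ p.1) (hδ p.2))
    have hGb : ∀ p, |G p| ≤ 1 := fun p =>
      sq_sub_le_one (hw p.1 p.2) (wTheta_mem hθ (hβ p.1) (hδbar p.2))
    have hFint : ∀ z, Integrable (fun y => F (z, y)) unif := fun z =>
      integrable_of_bound2 ((hFm.comp
        (measurable_const.prodMk measurable_id)).aestronglyMeasurable) 1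
        (fun y => hFb (z, y))
    have hGint : ∀ z, Integrable (fun y => G (z, y)) unif := fun z =>
      integrable_of_bound2 ((hGm.comp
        (measurable_const.prodMk measurable_id)).aestronglyMeasurable) 1
        (fun y => hGb (z, y))
    have hHm : StronglyMeasurable fun z => ∫ y, F (z, y) ∂unif :=
      hFm.stronglyMeasurable.integral_prod_right'
    have hHbm : StronglyMeasurable fun z => ∫ y, G (z, y) ∂unif :=
      hGm.stronglyMeasurable.integral_prod_right'
    have hHb : ∀ z, |∫ y, F (z, y) ∂unif| ≤ 1 := by
      intro z
      calc |∫ y, F (z, y) ∂unif| ≤ ∫ y, |F (z, y)| ∂unif := by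
            simpa [Real.norm_eq_abs] using
              norm_integral_le_integral_norm (fun y => F (z, y)) (μ := unif)
        _ ≤ ∫ _y, (1:ℝ) ∂unif :=
            integral_mono (hFint z).abs (integrable_const 1) (fun y => hFb (z, y))
        _ = 1 := by simp
    have hHbb : ∀ z, |∫ y, G (z, y) ∂unif| ≤ 1 := by
      intro z
      calc |∫ y, G (z, y) ∂unif| ≤ ∫ y, |G (z, y)| ∂unif := by
            simpa [Real.norm_eq_abs] using
              norm_integral_le_integral_norm (fun y => G (z, y)) (μ := unif)
        _ ≤ ∫ _y, (1:ℝ) ∂unif :=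
            integral_mono (hGint z).abs (integrable_const 1) (fun y => hGb (z, y))
        _ = 1 := by simp
    have hHint : Integrable (fun z => ∫ y, F (z, y) ∂unif) unif :=
      integrable_of_bound2 hHm.aestronglyMeasurable 1 hHb
    have hHbint : Integrable (fun z => ∫ y, G (z, y) ∂unif) unif :=
      integrable_of_bound2 hHbm.aestronglyMeasurable 1 hHbb
    have hdiff : ∀ z, |(∫ y, F (z, y) ∂unif) - ∫ y, G (z, y) ∂unif| ≤ 4 * ε := by
      intro z
      apply integral_diff_bound hε (hFint z) (hGint z)
      intro y
      exact key_pointwise' hε hθ (hw z y) (hβ z) (hβ z) (hδ y) (hδbar y)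
        (sqrt_sum_self_zero hε _) (hδclose y)
    have hre : ROmSig w (fun z => (μfn z, β z)) (fun y => (νfn y, δf y)) θ
        - ROmSig w (fun z => (μfn z, β z)) (fun y => (νfn y, δbar y)) θ
        = ∫ z, ((∫ y, F (z, y) ∂unif) - ∫ y, G (z, y) ∂unif) ∂unif := by
      unfold ROmSig
      rw [integral_sub hHint hHbint]
    rw [hre]
    calc |∫ z, ((∫ y, F (z, y) ∂unif) - ∫ y, G (z, y) ∂unif) ∂unif|
        ≤ ∫ z, |(∫ y, F (z, y) ∂unif) - ∫ y, G (z, y) ∂unif| ∂unif := by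
          simpa [Real.norm_eq_abs] using norm_integral_le_integral_norm
            (fun z => (∫ y, F (z, y) ∂unif) - ∫ y, G (z, y) ∂unif) (μ := unif)
      _ ≤ ∫ _z, 4 * ε ∂unif :=
          integral_mono (hHint.sub hHbint).abs (integrable_const _) hdiff
      _ = 4 * ε := by simp
      _ ≤ 12 * ε := by linarith

end
end
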